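/- arXiv:1808.01705 — 5 statements merged into one kernel-verified Lean document; each statement's English description precedes it below -/
import Mathlib

section
/- Let G be the group with presentation ⟨σ, τ ∣ τ^(p^m) = σ^(p^(m-k)) = 1, στσ⁻¹ = τ^(p^k+1)⟩ where m ≥ k ≥ 1 are positive integers. Then for every i ≥ 1, the (i+1)-th term of the descending central series of G is the cyclic subgroup generated by τ^(p^(ki)). -/
/-- Relators for the presentation ⟨σ, τ ∣ τ^(p^m) = σ^(p^(m-k)) = 1, στσ⁻¹ = τ^(p^k+1)⟩,
where `true` corresponds to σ and `false` to τ. -/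
def demushkinRels (p m k : ℕ) : Set (FreeGroup Bool) :=
  { FreeGroup.of false ^ p ^ m,
    FreeGroup.of true ^ p ^ (m - k),
    FreeGroup.of true * FreeGroup.of false * (FreeGroup.of true)⁻¹ *
      (FreeGroup.of false ^ (p ^ k + 1))⁻¹ }

section Abstract

open scoped commutatorElement

variable {G : Type*} [Group G] {p m k : ℕ} {s t : G}

/-- Every element conjugates `t` to `t ^ (1 + c p^k)` for some integer `c`. -/
theorem demushkin_conj (hp : p.Prime) (hk : 1 ≤ k) (hmk : k ≤ m)
    (hord : t ^ p ^ m = 1)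
    (hconj : s * t * s⁻¹ = t ^ (p ^ k + 1))
    (hgen : Subgroup.closure {s, t} = ⊤) (g : G) :
    ∃ c : ℤ, g * t * g⁻¹ = t ^ (1 + c * (p : ℤ) ^ k) := by
  have hordz : t ^ ((p : ℤ) ^ m) = 1 := by
    have := hord
    rw [← zpow_natCast] at this
    rw [show ((p : ℤ) ^ m) = ((p ^ m : ℕ) : ℤ) by push_cast; ring]
    exact this
  have hg : g ∈ Subgroup.closure ({s, t} : Set G) := by rw [hgen]; trivial
  induction hg using Subgroup.closure_induction with
  | mem x hx =>
    rcases hx with hx | hx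
    · subst hx
      refine ⟨1, ?_⟩
      rw [hconj, show ((1 : ℤ) + 1 * (p : ℤ) ^ k) = ((p ^ k + 1 : ℕ) : ℤ) by push_cast; ring,
        zpow_natCast]
    · simp only [Set.mem_singleton_iff] at hx; subst hx
      exact ⟨0, by simp⟩
  | one => exact ⟨0, by simp⟩
  | mul x y hx hy ihx ihy =>
    obtain ⟨c₁, h₁⟩ := ihx
    obtain ⟨c₂, h₂⟩ := ihy
    refine ⟨c₁ + c₂ + c₁ * c₂ * (p : ℤ) ^ k, ?_⟩
    have : x * y * t * (x * y)⁻¹ = x * (y * t * y⁻¹) * x⁻¹ := by group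
    rw [this, h₂, ← conj_zpow, h₁, ← zpow_mul]
    congr 1
    ring
  | inv x hx ihx =>
    obtain ⟨c, hc⟩ := ihx
    have hpz : Prime (p : ℤ) := Nat.prime_iff_prime_int.mp hp
    have hpdvd : (p : ℤ) ∣ (p : ℤ) ^ k := dvd_pow_self _ (by omega)
    have hnd : ¬ (p : ℤ) ∣ (1 + c * (p : ℤ) ^ k) := by
      intro hdvd
      have : (p : ℤ) ∣ 1 := by
        have := dvd_sub hdvd (Dvd.dvd.mul_left hpdvd c)
        simpa using this
      exact hpz.not_dvd_one this
    have hcop : IsCoprime (1 + c * (p : ℤ) ^ k) ((p : ℤ) ^ m) :=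
      ((hpz.coprime_iff_not_dvd.mpr hnd).symm).pow_right
    obtain ⟨u, v, huv⟩ := hcop
    refine ⟨-(u * c) - v * (p : ℤ) ^ (m - k), ?_⟩
    have hpmk : ((p : ℤ)) ^ m = (p : ℤ) ^ (m - k) * (p : ℤ) ^ k := by
      rw [← pow_add, Nat.sub_add_cancel hmk]
    have hu : u = 1 + (-(u * c) - v * (p : ℤ) ^ (m - k)) * (p : ℤ) ^ k := by
      have h := huv
      rw [hpmk] at h
      linear_combination h
    have hmul : t ^ ((p : ℤ) ^ m * v) = 1 := by rw [zpow_mul, hordz, one_zpow]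
    have hau : (1 + c * (p : ℤ) ^ k) * u = 1 - (p : ℤ) ^ m * v := by linear_combination huv
    have key : x * t ^ u * x⁻¹ = t := by
      rw [← conj_zpow, hc, ← zpow_mul, hau, zpow_sub, hmul, zpow_one]
      simp
    have hfin : x⁻¹ * t * x = t ^ u := by
      calc x⁻¹ * t * x = x⁻¹ * (x * t ^ u * x⁻¹) * x := by rw [key]
        _ = t ^ u := by group
    rw [inv_inv]
    rw [← hu]
    exact hfin

/-- conjugation of powers of t -/
theorem demushkin_conj_zpow {g : G} {a : ℤ} (hg : g * t * g⁻¹ = t ^ a) (j : ℤ) :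
    g * t ^ j * g⁻¹ = t ^ (a * j) := by
  rw [← conj_zpow, hg, ← zpow_mul]

theorem demushkin_zpowers_normal (hp : p.Prime) (hk : 1 ≤ k) (hmk : k ≤ m)
    (hord : t ^ p ^ m = 1)
    (hconj : s * t * s⁻¹ = t ^ (p ^ k + 1))
    (hgen : Subgroup.closure {s, t} = ⊤) (N : ℕ) :
    (Subgroup.zpowers (t ^ N)).Normal := by
  constructor
  intro x hx g
  obtain ⟨j, hj⟩ := Subgroup.mem_zpowers_iff.mp hx
  obtain ⟨c, hc⟩ := demushkin_conj hp hk hmk hord hconj hgen g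
  refine Subgroup.mem_zpowers_iff.mpr ⟨(1 + c * (p : ℤ) ^ k) * j, ?_⟩
  rw [← hj]
  have h1 : ((t ^ N : G)) = t ^ (N : ℤ) := by rw [zpow_natCast]
  rw [h1, ← zpow_mul, ← zpow_mul, demushkin_conj_zpow hc]
  congr 1
  ring

theorem demushkin_step (hp : p.Prime) (hk : 1 ≤ k) (hmk : k ≤ m)
    (hord : t ^ p ^ m = 1)
    (hconj : s * t * s⁻¹ = t ^ (p ^ k + 1))
    (hgen : Subgroup.closure {s, t} = ⊤) (N : ℕ) :
    ⁅Subgroup.zpowers (t ^ N), (⊤ : Subgroup G)⁆ = Subgroup.zpowers (t ^ (N * p ^ k)) := by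
  apply le_antisymm
  · rw [Subgroup.commutator_le]
    intro g₁ hg₁ g₂ _
    obtain ⟨n, hn⟩ := Subgroup.mem_zpowers_iff.mp hg₁
    obtain ⟨c, hc⟩ := demushkin_conj hp hk hmk hord hconj hgen g₂
    refine Subgroup.mem_zpowers_iff.mpr ⟨-(n * c), ?_⟩
    have hg1 : g₁ = t ^ ((N : ℤ) * n) := by
      rw [← hn, ← zpow_natCast t N, ← zpow_mul]
    rw [commutatorElement_def, hg1]
    have : g₂ * (t ^ ((N : ℤ) * n))⁻¹ * g₂⁻¹ =
        t ^ ((1 + c * (p : ℤ) ^ k) * -((N : ℤ) * n)) := by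
      rw [← zpow_neg, demushkin_conj_zpow hc]
    calc (t ^ (N * p ^ k)) ^ (-(n * c))
        = t ^ (((N * p ^ k : ℕ) : ℤ) * (-(n * c))) := by
          rw [← zpow_natCast t (N * p ^ k), ← zpow_mul]
      _ = t ^ ((N : ℤ) * n + (1 + c * (p : ℤ) ^ k) * -((N : ℤ) * n)) := by
          congr 1; push_cast; ring
      _ = t ^ ((N : ℤ) * n) * t ^ ((1 + c * (p : ℤ) ^ k) * -((N : ℤ) * n)) := zpow_add t _ _
      _ = t ^ ((N : ℤ) * n) * (g₂ * (t ^ ((N : ℤ) * n))⁻¹ * g₂⁻¹) := by rw [this]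
      _ = t ^ ((N : ℤ) * n) * g₂ * (t ^ ((N : ℤ) * n))⁻¹ * g₂⁻¹ := by group
  · rw [Subgroup.zpowers_le]
    have hmem : ⁅t ^ N, s⁆ ∈ ⁅Subgroup.zpowers (t ^ N), (⊤ : Subgroup G)⁆ :=
      Subgroup.commutator_mem_commutator (Subgroup.mem_zpowers _) (Subgroup.mem_top _)
    have hval : ⁅t ^ N, s⁆ = (t ^ (N * p ^ k))⁻¹ := by
      have hsc : s * t * s⁻¹ = t ^ ((p ^ k + 1 : ℕ) : ℤ) := by rw [zpow_natCast]; exact hconj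
      have h1 : s * t ^ (-(N : ℤ)) * s⁻¹ = t ^ (((p ^ k + 1 : ℕ) : ℤ) * (-(N : ℤ))) :=
        demushkin_conj_zpow hsc _
      have h2 : (t ^ N : G) = t ^ (N : ℤ) := by rw [zpow_natCast]
      rw [commutatorElement_def]
      calc t ^ N * s * (t ^ N)⁻¹ * s⁻¹
          = t ^ (N : ℤ) * (s * t ^ (-(N : ℤ)) * s⁻¹) := by rw [h2]; group
        _ = t ^ ((N : ℤ) + ((p ^ k + 1 : ℕ) : ℤ) * (-(N : ℤ))) := by
            rw [h1, ← zpow_add]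
        _ = t ^ (-((N * p ^ k : ℕ) : ℤ)) := by congr 1; push_cast; ring
        _ = (t ^ (N * p ^ k))⁻¹ := by rw [zpow_neg, zpow_natCast]
    have := Subgroup.inv_mem _ hmem
    rwa [hval, inv_inv] at this

theorem demushkin_base (hp : p.Prime) (hk : 1 ≤ k) (hmk : k ≤ m)
    (hord : t ^ p ^ m = 1)
    (hconj : s * t * s⁻¹ = t ^ (p ^ k + 1))
    (hgen : Subgroup.closure {s, t} = ⊤) :
    ⁅(⊤ : Subgroup G), (⊤ : Subgroup G)⁆ ≤ Subgroup.zpowers (t ^ p ^ k) := by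
  set Z := Subgroup.zpowers (t ^ p ^ k) with hZ
  haveI hnorm : Z.Normal := demushkin_zpowers_normal hp hk hmk hord hconj hgen (p ^ k)
  rw [Subgroup.commutator_le]
  intro g₁ _ g₂ _
  rw [← QuotientGroup.eq_one_iff (N := Z)]
  have hmap : (QuotientGroup.mk' Z) ⁅g₁, g₂⁆ = ⁅(QuotientGroup.mk' Z) g₁, (QuotientGroup.mk' Z) g₂⁆ :=
    map_commutatorElement _ _ _
  show (QuotientGroup.mk' Z) ⁅g₁, g₂⁆ = 1
  rw [hmap, commutatorElement_eq_one_iff_commute]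
  -- the quotient is generated by the images of s and t, which commute
  have hst : Commute ((QuotientGroup.mk' Z) s) ((QuotientGroup.mk' Z) t) := by
    rw [← commutatorElement_eq_one_iff_commute, ← map_commutatorElement,
      QuotientGroup.mk'_apply, QuotientGroup.eq_one_iff]
    have : ⁅s, t⁆ = t ^ p ^ k := by
      rw [commutatorElement_def, show s * t * s⁻¹ * t⁻¹ = (s * t * s⁻¹) * t⁻¹ by group, hconj,
        pow_succ]
      group
    rw [this]
    exact Subgroup.mem_zpowers _
  have hQgen : Subgroup.closure ({(QuotientGroup.mk' Z) s, (QuotientGroup.mk' Z) t} :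
      Set (G ⧸ Z)) = ⊤ := by
    have himg : ((QuotientGroup.mk' Z) '' {s, t}) =
        {(QuotientGroup.mk' Z) s, (QuotientGroup.mk' Z) t} := Set.image_pair _ _ _
    rw [← himg, ← MonoidHom.map_closure, hgen]
    exact Subgroup.map_top_of_surjective _ (QuotientGroup.mk'_surjective Z)
  have h₁ : (QuotientGroup.mk' Z) g₁ ∈ Subgroup.closure
      ({(QuotientGroup.mk' Z) s, (QuotientGroup.mk' Z) t} : Set (G ⧸ Z)) := by
    rw [hQgen]; trivial
  have h₂ : (QuotientGroup.mk' Z) g₂ ∈ Subgroup.closure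
      ({(QuotientGroup.mk' Z) s, (QuotientGroup.mk' Z) t} : Set (G ⧸ Z)) := by
    rw [hQgen]; trivial
  refine Subgroup.closure_induction₂ (p := fun x y _ _ => Commute x y) ?_
    (fun x _ => Commute.one_left x) (fun x _ => Commute.one_right x)
    (fun x y z _ _ _ ih₁ ih₂ => ih₁.mul_left ih₂)
    (fun y z x _ _ _ ih₁ ih₂ => ih₁.mul_right ih₂)
    (fun x y _ _ ih => ih.inv_left) (fun x y _ _ ih => ih.inv_right) h₁ h₂
  intro x y hx hy
  simp only [Set.mem_insert_iff, Set.mem_singleton_iff] at hx hy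
  rcases hx with hx | hx <;> rcases hy with hy | hy <;> subst hx <;> subst hy
  · exact Commute.refl _
  · exact hst
  · exact hst.symm
  · exact Commute.refl _

theorem demushkin_lcs (hp : p.Prime) (hk : 1 ≤ k) (hmk : k ≤ m)
    (hord : t ^ p ^ m = 1)
    (hconj : s * t * s⁻¹ = t ^ (p ^ k + 1))
    (hgen : Subgroup.closure {s, t} = ⊤) :
    ∀ i : ℕ, 1 ≤ i → Subgroup.lowerCentralSeries (⊤ : Subgroup G) i = Subgroup.zpowers (t ^ p ^ (k * i)) := by
  intro i hi
  induction i, hi using Nat.le_induction with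
  | base =>
    have hstep := demushkin_step hp hk hmk hord hconj hgen 1
    rw [one_mul] at hstep
    apply le_antisymm
    · show ⁅(⊤ : Subgroup G), ⊤⁆ ≤ _
      have := demushkin_base hp hk hmk hord hconj hgen
      rwa [show p ^ (k * 1) = p ^ k by rw [mul_one]]
    · show _ ≤ ⁅(⊤ : Subgroup G), ⊤⁆
      rw [show p ^ (k * 1) = p ^ k by rw [mul_one], ← hstep]
      exact Subgroup.commutator_mono le_top le_rfl
  | succ i hi ih =>
    show ⁅Subgroup.lowerCentralSeries (⊤ : Subgroup G) i, ⊤⁆ = _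
    rw [ih, demushkin_step hp hk hmk hord hconj hgen]
    congr 2
    rw [← pow_add, Nat.mul_succ]

end Abstract

section Instantiate

variable (p m k : ℕ)

theorem demushkin_rel_eq_one {r : FreeGroup Bool} (hr : r ∈ demushkinRels p m k) :
    PresentedGroup.mk (demushkinRels p m k) r = 1 :=
  (QuotientGroup.eq_one_iff r).mpr (Subgroup.subset_normalClosure hr)

theorem demushkin_hord :
    (PresentedGroup.of false : PresentedGroup (demushkinRels p m k)) ^ p ^ m = 1 := by
  have : PresentedGroup.mk (demushkinRels p m k) (FreeGroup.of false ^ p ^ m) = 1 :=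
    demushkin_rel_eq_one p m k (by simp [demushkinRels])
  rw [map_pow] at this
  exact this

theorem demushkin_hconj :
    (PresentedGroup.of true : PresentedGroup (demushkinRels p m k)) * PresentedGroup.of false *
      (PresentedGroup.of true)⁻¹ = (PresentedGroup.of false) ^ (p ^ k + 1) := by
  have : PresentedGroup.mk (demushkinRels p m k)
      (FreeGroup.of true * FreeGroup.of false * (FreeGroup.of true)⁻¹ *
        (FreeGroup.of false ^ (p ^ k + 1))⁻¹) = 1 :=
    demushkin_rel_eq_one p m k (by simp [demushkinRels])
  rw [map_mul, map_inv, map_mul, map_inv, map_pow] at this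
  rw [← mul_inv_eq_one]
  exact this

theorem demushkin_hgen :
    Subgroup.closure ({PresentedGroup.of true, PresentedGroup.of false} :
      Set (PresentedGroup (demushkinRels p m k))) = ⊤ := by
  have : (Set.range (PresentedGroup.of : Bool → PresentedGroup (demushkinRels p m k))) =
      {PresentedGroup.of true, PresentedGroup.of false} := by
    ext g
    simp [Set.mem_range, Bool.exists_bool, or_comm]
  rw [← this, PresentedGroup.closure_range_of]

end Instantiate

theorem stmt_0 (p m k : ℕ) (hp : p.Prime) (hk : 1 ≤ k) (hmk : k ≤ m) :
    ∀ i : ℕ, 1 ≤ i →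
      Subgroup.lowerCentralSeries (⊤ : Subgroup (PresentedGroup (demushkinRels p m k))) i =
        Subgroup.zpowers
          ((PresentedGroup.of false : PresentedGroup (demushkinRels p m k)) ^ p ^ (k * i)) := by
  exact demushkin_lcs hp hk hmk (demushkin_hord p m k) (demushkin_hconj p m k)
    (demushkin_hgen p m k)
end

section
/- Let p be a prime and k a positive integer. In the group U_{k+2}(ℤ/pℤ) of (k+2)×(k+2) upper-triangular unipotent matrices over ℤ/pℤ, set X = I + E_{1,2} + E_{2,3} + ⋯ + E_{k,k+1} and Y = I + E_{k+1,k+2}. Then for every 0 ≤ i ≤ k, the iterated commutator [X^{(i)}, Y] equals I + E_{k+1−i, k+2}. -/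
/-- Iterated commutator: `iterComm A B 0 = B`, `iterComm A B (i+1) = [A, iterComm A B i]`
where `[a,b] = a * b * a⁻¹ * b⁻¹`. -/
def iterComm {M : Type*} [Mul M] [Inv M] (A B : M) : ℕ → M
  | 0 => B
  | n + 1 => A * iterComm A B n * A⁻¹ * (iterComm A B n)⁻¹

section Aux

open Matrix

variable {R : Type*} [CommRing R] (k : ℕ)

private def NN (R : Type*) [CommRing R] (k : ℕ) : Matrix (Fin (k+2)) (Fin (k+2)) R :=
  ∑ j : Fin k, single (j.castLE (Nat.le_add_right k 2)) (j.succ.castLE (Nat.le_succ (k+1))) (1 : R)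

private lemma E_mul_N (a : Fin (k+2)) (x : R) :
    single a (⟨k+1, Nat.lt_succ_self (k+1)⟩ : Fin (k+2)) x * NN R k = 0 := by
  rw [NN, Finset.mul_sum]
  refine Finset.sum_eq_zero fun j _ => ?_
  apply single_mul_single_of_ne
  apply Fin.ne_of_val_ne
  simp only [Fin.coe_castLE]
  omega

private lemma N_mul_E (a : ℕ) (ha : 0 < a) (hak : a ≤ k) :
    NN R k * single (⟨a, by omega⟩ : Fin (k+2)) (⟨k+1, Nat.lt_succ_self (k+1)⟩ : Fin (k+2)) (1 : R)
      = single (⟨a-1, by omega⟩ : Fin (k+2)) (⟨k+1, Nat.lt_succ_self (k+1)⟩ : Fin (k+2)) 1 := by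
  rw [NN, Finset.sum_mul]
  rw [Finset.sum_eq_single (⟨a-1, by omega⟩ : Fin k)]
  · have h1 : ((⟨a-1, by omega⟩ : Fin k)).succ.castLE (Nat.le_succ (k+1)) =
      (⟨a, by omega⟩ : Fin (k+2)) := by
      apply Fin.ext
      simp only [Fin.coe_castLE, Fin.val_succ]
      omega
    have h2 : ((⟨a-1, by omega⟩ : Fin k)).castLE (Nat.le_add_right k 2 : k ≤ k + 2) =
      (⟨a-1, by omega⟩ : Fin (k+2)) := by
      apply Fin.ext
      simp only [Fin.coe_castLE]
    rw [h1, h2, single_mul_single_same, one_mul]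
  · intro j _ hj
    apply single_mul_single_of_ne
    apply Fin.ne_of_val_ne
    simp only [Fin.coe_castLE, Fin.val_succ]
    intro hc
    exact hj (Fin.ext (by simp only [Fin.val_mk]; omega))
  · intro h
    exact absurd (Finset.mem_univ _) h

private lemma E_mul_E (a b : ℕ) (hb : b ≤ k) (hab : a ≤ k+1) (x y : R) :
    single (⟨a, by omega⟩ : Fin (k+2)) (⟨k+1, Nat.lt_succ_self (k+1)⟩ : Fin (k+2)) x *
      single (⟨b, by omega⟩ : Fin (k+2)) (⟨k+1, Nat.lt_succ_self (k+1)⟩ : Fin (k+2)) y = 0 := by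
  apply single_mul_single_of_ne
  apply Fin.ne_of_val_ne
  simp only [Fin.val_mk]
  omega

private lemma NN_diag (i : Fin (k+2)) : NN R k i i = 0 := by
  rw [NN, Matrix.sum_apply]
  refine Finset.sum_eq_zero fun m _ => ?_
  simp only [single, Matrix.of_apply]
  rw [if_neg]
  rintro ⟨h1, h2⟩
  rw [Fin.ext_iff] at h1 h2
  simp only [Fin.coe_castLE, Fin.val_succ] at h1 h2
  omega

private lemma isUnit_det_X : IsUnit ((1 + NN R k).det) := by
  have h : (1 + NN R k).BlockTriangular id := by
    intro i j hij
    simp only [id_eq] at hij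
    have hne : i ≠ j := fun h => by subst h; exact lt_irrefl _ hij
    simp only [Matrix.add_apply, Matrix.one_apply_ne hne, zero_add]
    rw [NN, Matrix.sum_apply]
    refine Finset.sum_eq_zero fun m _ => ?_
    simp only [single, Matrix.of_apply]
    rw [if_neg]
    rintro ⟨h1, h2⟩
    rw [Fin.ext_iff] at h1 h2
    simp only [Fin.coe_castLE, Fin.val_succ] at h1 h2
    have : (j : ℕ) < (i : ℕ) := hij
    omega
  rw [Matrix.det_of_upperTriangular h]
  have hd : ∀ i : Fin (k+2), (1 + NN R k) i i = 1 := by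
    intro i
    rw [Matrix.add_apply, Matrix.one_apply_eq, NN_diag, add_zero]
  simp only [hd, Finset.prod_const_one, isUnit_one]

private lemma key_step (a : ℕ) (ha : 0 < a) (hak : a ≤ k) :
    (1 + NN R k) *
      (1 + single (⟨a, by omega⟩ : Fin (k+2)) (⟨k+1, Nat.lt_succ_self (k+1)⟩ : Fin (k+2)) (1 : R)) *
      (1 + NN R k)⁻¹ *
      (1 + single (⟨a, by omega⟩ : Fin (k+2)) (⟨k+1, Nat.lt_succ_self (k+1)⟩ : Fin (k+2)) (1 : R))⁻¹
    = 1 + single (⟨a-1, by omega⟩ : Fin (k+2)) (⟨k+1, Nat.lt_succ_self (k+1)⟩ : Fin (k+2)) 1 := by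
  set E : Matrix (Fin (k+2)) (Fin (k+2)) R :=
    single (⟨a, by omega⟩ : Fin (k+2)) (⟨k+1, Nat.lt_succ_self (k+1)⟩ : Fin (k+2)) (1 : R) with hE
  set E' : Matrix (Fin (k+2)) (Fin (k+2)) R :=
    single (⟨a-1, by omega⟩ : Fin (k+2)) (⟨k+1, Nat.lt_succ_self (k+1)⟩ : Fin (k+2)) (1 : R) with hE'
  have hEE : E * E = 0 := E_mul_E k a a hak (by omega) 1 1
  have hE'E : E' * E = 0 := E_mul_E k (a-1) a hak (by omega) 1 1
  have hCinv : (1 + E)⁻¹ = 1 - E := by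
    apply Matrix.inv_eq_right_inv
    rw [mul_sub, mul_one, add_mul, one_mul, hEE, add_zero]
    abel
  have hXinv : (1 + NN R k) * (1 + NN R k)⁻¹ = 1 :=
    Matrix.mul_nonsing_inv _ (isUnit_det_X k)
  have hEXinv : E * (1 + NN R k)⁻¹ = E := by
    have h : E * (1 + NN R k) = E := by
      rw [mul_add, mul_one, hE, E_mul_N, add_zero]
    calc E * (1 + NN R k)⁻¹ = E * (1 + NN R k) * (1 + NN R k)⁻¹ := by rw [h]
      _ = E := by rw [mul_assoc, hXinv, mul_one]
  have hE'Xinv : E' * (1 + NN R k)⁻¹ = E' := by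
    have h : E' * (1 + NN R k) = E' := by
      rw [mul_add, mul_one, hE', E_mul_N, add_zero]
    calc E' * (1 + NN R k)⁻¹ = E' * (1 + NN R k) * (1 + NN R k)⁻¹ := by rw [h]
      _ = E' := by rw [mul_assoc, hXinv, mul_one]
  have hNE : NN R k * E = E' := N_mul_E k a ha hak
  have step1 : (1 + NN R k) * (1 + E) = (1 + NN R k) + (E + E') := by
    rw [mul_add, mul_one, add_mul, one_mul, hNE]
  have hEE'Xinv : (E + E') * (1 + NN R k)⁻¹ = E + E' := by
    rw [add_mul, hEXinv, hE'Xinv]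
  have h2 : (1 + (E + E')) * E = E := by
    rw [add_mul, one_mul, add_mul, hEE, hE'E, add_zero, add_zero]
  rw [step1, hCinv, add_mul, hXinv, hEE'Xinv, mul_sub, mul_one, h2]
  abel

end Aux

theorem stmt_6 (p k : ℕ) (hp : p.Prime) (hk : 1 ≤ k) :
    ∀ i : ℕ, i ≤ k →
      iterComm
        (1 + ∑ j : Fin k,
          Matrix.single (j.castLE (by omega)) (j.succ.castLE (by omega))
            (1 : ZMod p) : Matrix (Fin (k + 2)) (Fin (k + 2)) (ZMod p))
        (1 + Matrix.single (⟨k, by omega⟩ : Fin (k + 2)) ⟨k + 1, by omega⟩ (1 : ZMod p))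
        i
      = 1 + Matrix.single (⟨k - i, by omega⟩ : Fin (k + 2)) ⟨k + 1, by omega⟩ 1 := by
  intro i
  induction i with
  | zero => intro _; simp [iterComm]
  | succ n ih =>
    intro hn
    have hn' : n ≤ k := by omega
    rw [iterComm, ih hn']
    exact key_step (R := ZMod p) k (k - n) (by omega) (by omega)
end

section
/- Let F be a field of characteristic ≠ p with ζ_{p^k} ∈ F, ζ_{p^{k+1}} ∉ F (and ζ₄ ∈ F if p = 2), and let a ∈ F^× be such that the class of a in F^×/(F^×)^p does not lie in the subgroup generated by the class of ζ_{p^k}. Then for every m ≥ k, a is not a p-th power in F(ζ_{p^m}); moreover if p = 2 then a ∉ −4·F(ζ_{2^m})^4. -/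
open Polynomial

-- (1+d)^i = 1 + i d + d^2 t
private lemma sum_pow_aux (d : ℤ) : ∀ i : ℕ, ∃ t : ℤ, (1 + d) ^ i = 1 + i * d + d ^ 2 * t := by
  intro i
  induction i with
  | zero => exact ⟨0, by norm_num⟩
  | succ n ih =>
    obtain ⟨t, ht⟩ := ih
    exact ⟨t + n + d * t, by rw [pow_succ, ht]; push_cast; ring⟩

/-- single Hensel-type step -/
private lemma stepInt (p j : ℕ) (hj : 1 ≤ j) (x : ℤ) (h : (p:ℤ)^j ∣ x - 1) :
    (p:ℤ)^(j+1) ∣ x^p - 1 := by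
  obtain ⟨s, hs⟩ := h
  have hdvd : (x - 1) ∣ (∑ i ∈ Finset.range p, x ^ i) - (p : ℤ) := by
    have : (∑ i ∈ Finset.range p, x ^ i) - (p : ℤ)
        = ∑ i ∈ Finset.range p, (x ^ i - 1) := by
      rw [Finset.sum_sub_distrib]
      simp
    rw [this]
    exact Finset.dvd_sum fun i _ => by
      simpa using sub_dvd_pow_sub_pow x 1 i
  obtain ⟨u, hu⟩ := hdvd
  have hx : x ^ p - 1 = (p:ℤ) * (x - 1) + (x-1)^2 * u := by
    have h := geom_sum_mul x p
    linear_combination -h + (x-1) * hu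
  rw [hx]
  apply dvd_add
  · rw [pow_succ, mul_comm]
    exact mul_dvd_mul (by exact_mod_cast dvd_refl _) (hs ▸ Dvd.intro s rfl)
  · apply Dvd.dvd.mul_right
    calc (p:ℤ)^(j+1) ∣ (p:ℤ)^(2*j) := pow_dvd_pow _ (by omega)
      _ ∣ (x-1)^2 := by rw [hs, mul_pow, ← pow_mul, mul_comm j 2]; exact Dvd.intro _ rfl

private lemma iterInt (p k : ℕ) (hk : 1 ≤ k) (x : ℤ) (h : (p:ℤ)^k ∣ x - 1) :
    ∀ e : ℕ, (p:ℤ)^(k+e) ∣ x^(p^e) - 1 := by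
  intro e
  induction e with
  | zero => simpa using h
  | succ e ih =>
    have h2 : (p:ℤ)^((k+e)+1) ∣ (x^(p^e))^p - 1 := stepInt p (k+e) (by omega) _ (by
      have : x ^ p ^ e - 1 = x ^ p ^ e - 1 := rfl
      simpa using ih)
    rw [← pow_mul, ← pow_succ] at h2
    have : k + (e+1) = (k+e)+1 := by omega
    rw [this]
    exact h2

private lemma keyInt (p k m : ℕ) (hp : p.Prime) (hk : 1 ≤ k) (hk2 : p = 2 → 2 ≤ k)
    (hm : k ≤ m) (c : ℤ) (h1 : (p:ℤ)^k ∣ c - 1) (h2 : (p:ℤ)^m ∣ c^p - 1) :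
    (p:ℤ)^(m-1) ∣ c - 1 := by
  have hpI : Prime (p : ℤ) := Nat.prime_iff_prime_int.mp hp
  have hm1 : 1 ≤ m := le_trans hk hm
  have hpd : (p:ℤ) ∣ c - 1 := dvd_trans (dvd_pow_self _ (by omega : k ≠ 0)) h1
  obtain ⟨d', hd'⟩ := id hpd
  have hgeom : (∑ i ∈ Finset.range p, c ^ i) * (c - 1) = c ^ p - 1 := geom_sum_mul c p
  obtain ⟨w, hw, hpw⟩ : ∃ w : ℤ, (∑ i ∈ Finset.range p, c ^ i) = p * w ∧ ¬ (p:ℤ) ∣ w := by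
    rcases eq_or_ne p 2 with h2' | hodd
    · subst h2'
      obtain ⟨e, he⟩ : (4:ℤ) ∣ c - 1 := by
        refine dvd_trans ?_ h1
        have h4 : ((2:ℕ):ℤ)^2 ∣ ((2:ℕ):ℤ)^k := pow_dvd_pow _ (hk2 rfl)
        norm_num at h4 ⊢
        exact h4
      refine ⟨1 + 2*e, ?_, ?_⟩
      · rw [Finset.sum_range_succ, Finset.sum_range_one]
        push_cast
        linear_combination he
      · intro hdvd
        obtain ⟨v, hv⟩ := hdvd
        omega
    · -- odd case
      obtain ⟨q, hq⟩ := hp.odd_of_ne_two hodd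
      choose t ht using sum_pow_aux (c - 1)
      have hS : (∑ i ∈ Finset.range p, c ^ i)
          = p + ((p*q : ℕ) : ℤ) * (c-1) + (c-1)^2 * (∑ i ∈ Finset.range p, t i) := by
        have hsum : ∀ i ∈ Finset.range p, c ^ i = 1 + i * (c-1) + (c-1)^2 * t i := by
          intro i _
          have := ht i
          rw [show (1:ℤ) + (c-1) = c by ring] at this
          exact this
        rw [Finset.sum_congr rfl hsum, Finset.sum_add_distrib, Finset.sum_add_distrib,
          Finset.sum_const, Finset.card_range, ← Finset.sum_mul, ← Finset.mul_sum]
        have hgauss : (∑ i ∈ Finset.range p, (i:ℤ)) = ((p*q : ℕ) : ℤ) := by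
          have hnat : (∑ i ∈ Finset.range p, i) * 2 = p * (p - 1) := Finset.sum_range_id_mul_two p
          have hp1 : p - 1 = 2*q := by omega
          rw [hp1] at hnat
          have hnat2 : (∑ i ∈ Finset.range p, i) * 2 = (p * q) * 2 := by rw [hnat]; ring
          have : (∑ i ∈ Finset.range p, i) = p * q := by omega
          rw [← this]
          push_cast
          ring
        rw [hgauss]
        push_cast
        ring
      refine ⟨1 + q * (c - 1) + p * (d'^2 * (∑ i ∈ Finset.range p, t i)), ?_, ?_⟩
      · rw [hS, hd']
        push_cast [hq]
        ring
      · intro hdvd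
        have hd1 : (p:ℤ) ∣ (q : ℤ) * (c-1) + (p:ℤ) * (d'^2 * (∑ i ∈ Finset.range p, t i)) :=
          dvd_add (Dvd.dvd.mul_left hpd q) (dvd_mul_right _ _)
        have : (p:ℤ) ∣ 1 := by
          have := dvd_sub hdvd hd1
          simpa using this
        exact hpI.not_dvd_one this
  -- now conclude
  have hdvd2 : (p:ℤ)^(m-1) * (p:ℤ) ∣ (w * (c-1)) * (p:ℤ) := by
    have heq : c^p - 1 = (w * (c-1)) * (p:ℤ) := by rw [← hgeom, hw]; ring
    rw [← heq]
    calc (p:ℤ)^(m-1) * (p:ℤ) = (p:ℤ)^m := by rw [← pow_succ]; congr 1; omega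
      _ ∣ c^p - 1 := h2
  have hpne : (p:ℤ) ≠ 0 := by exact_mod_cast hp.ne_zero
  have hdvd3 : (p:ℤ)^(m-1) ∣ w * (c-1) := (mul_dvd_mul_iff_right hpne).mp hdvd2
  have hcop : IsCoprime ((p:ℤ)^(m-1)) w := IsCoprime.pow_left ((hpI.coprime_iff_not_dvd).mpr hpw)
  exact hcop.dvd_of_dvd_mul_left hdvd3

private lemma cyclic_aux {G : Type*} [Group G] [Fintype G] [DecidableEq G]
    (p e : ℕ) (hp : p.Prime)
    (hcomm : ∀ a b : G, a * b = b * a)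
    (hexp : ∀ g : G, g ^ (p ^ e) = 1)
    (htor : ∀ s : Finset G, (∀ g ∈ s, g ^ p = 1) → s.card ≤ p) :
    IsCyclic G := by
  apply isCyclic_of_card_pow_eq_one_le
  intro n hn
  have key : ∀ j : ℕ, (Finset.univ.filter fun a : G => a ^ (p ^ j) = 1).card ≤ p ^ j := by
    intro j
    induction j with
    | zero =>
      have hsub : (Finset.univ.filter fun a : G => a ^ (p ^ 0) = 1) ⊆ {1} := by
        intro a ha
        simp only [Finset.mem_filter, pow_zero, pow_one] at ha
        simp [ha.2]
      simpa using Finset.card_le_card hsub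
    | succ j ih =>
      set s := Finset.univ.filter fun a : G => a ^ (p ^ (j+1)) = 1 with hs
      have hfiber : ∀ b ∈ s.image (· ^ p), (s.filter (· ^ p = b)).card ≤ p := by
        intro b hb
        obtain ⟨a₀, ha₀s, ha₀⟩ := Finset.mem_image.mp hb
        have hcard := htor ((s.filter (· ^ p = b)).image (· * a₀⁻¹)) ?_
        · rwa [Finset.card_image_of_injective _ (mul_left_injective a₀⁻¹)] at hcard
        · intro g hg
          obtain ⟨a, hamem, rfl⟩ := Finset.mem_image.mp hg
          have ha : a ^ p = b := (Finset.mem_filter.mp hamem).2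
          have : Commute a a₀⁻¹ := hcomm a a₀⁻¹
          rw [this.mul_pow, ha, inv_pow, ha₀, mul_inv_cancel]
      calc s.card ≤ p * (s.image (· ^ p)).card := Finset.card_le_mul_card_image s p hfiber
        _ ≤ p * p ^ j := by
            apply Nat.mul_le_mul_left
            refine le_trans (Finset.card_le_card ?_) ih
            intro b hb
            obtain ⟨a, hamem, rfl⟩ := Finset.mem_image.mp hb
            have ha : a ^ (p ^ (j+1)) = 1 := (Finset.mem_filter.mp hamem).2
            simp only [Finset.mem_filter, Finset.mem_univ, true_and]
            rw [← pow_mul, ← pow_succ']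
            exact ha
        _ = p ^ (j+1) := (pow_succ' p j).symm
  obtain ⟨j, hje, hj⟩ := (Nat.dvd_prime_pow hp).mp (Nat.gcd_dvd_right n (p^e))
  have hsub : (Finset.univ.filter fun a : G => a ^ n = 1)
      ⊆ (Finset.univ.filter fun a : G => a ^ (p ^ j) = 1) := by
    intro a ha
    simp only [Finset.mem_filter, Finset.mem_univ, true_and] at ha ⊢
    have h₁ : orderOf a ∣ n := orderOf_dvd_of_pow_eq_one ha
    have h₂ : orderOf a ∣ p^e := orderOf_dvd_of_pow_eq_one (hexp a)
    exact orderOf_dvd_iff_pow_eq_one.mp (hj ▸ Nat.dvd_gcd h₁ h₂)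
  calc (Finset.univ.filter fun a : G => a ^ n = 1).card
      ≤ (Finset.univ.filter fun a : G => a ^ (p ^ j) = 1).card := Finset.card_le_card hsub
    _ ≤ p ^ j := key j
    _ ≤ n := Nat.le_of_dvd hn (hj ▸ Nat.gcd_dvd_left n (p^e))

theorem stmt_11 (p k : ℕ) (hp : p.Prime) (hk : 1 ≤ k)
    (F : Type*) [Field F] (hchar : (p : F) ≠ 0) (hk2 : p = 2 → 2 ≤ k)
    (ζk : F) (hζk : IsPrimitiveRoot ζk (p ^ k))
    (hnok1 : ¬ ∃ ζ : F, IsPrimitiveRoot ζ (p ^ (k + 1)))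
    (a : F) (ha : a ≠ 0)
    (hna : ∀ (f : F) (b : ℤ), a ≠ f ^ p * ζk ^ b)
    (m : ℕ) (hm : k ≤ m)
    (K : Type*) [Field K] [Algebra F K]
    (ζ : K) (hζ : IsPrimitiveRoot ζ (p ^ m))
    (hadj : IntermediateField.adjoin F {ζ} = ⊤) :
    (¬ ∃ y : K, algebraMap F K a = y ^ p) ∧
    (p = 2 → ¬ ∃ y : K, algebraMap F K a = -4 * y ^ 4) := by
  have inj : Function.Injective (algebraMap F K) := (algebraMap F K).injective
  set φ := algebraMap F K with hφ
  have hppos : 0 < p := hp.pos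
  have hpkpos : 0 < p ^ k := pow_pos hppos k
  have hpmpos : 0 < p ^ m := pow_pos hppos m
  have hζK : IsPrimitiveRoot (φ ζk) (p ^ k) := hζk.map_of_injective inj
  have hζ0 : ζ ≠ 0 := hζ.ne_zero hpmpos.ne'
  obtain ⟨e, he⟩ : ∃ e, m = k + e := ⟨m - k, by omega⟩
  have hζe : IsPrimitiveRoot (ζ ^ p ^ e) (p ^ k) :=
    hζ.pow hpmpos (by rw [he, pow_add, mul_comm])
  obtain ⟨c₀, hc₀lt, hc₀⟩ : ∃ i < p ^ k, (φ ζk) ^ i = ζ ^ p ^ e := by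
    haveI : NeZero (p ^ k) := ⟨hpkpos.ne'⟩
    exact hζK.eq_pow_of_pow_eq_one hζe.pow_eq_one
  -- σ is determined by its value at ζ
  have AEXT : ∀ σ τ : K ≃ₐ[F] K, σ ζ = τ ζ → σ = τ := by
    intro σ τ h
    apply AlgEquiv.ext
    intro x
    have hx : x ∈ IntermediateField.adjoin F {ζ} := by rw [hadj]; trivial
    induction hx using IntermediateField.adjoin_induction with
    | mem x hx => rw [Set.mem_singleton_iff] at hx; subst hx; exact h
    | algebraMap r => exact (σ.commutes r).trans (τ.commutes r).symm
    | add x y _ _ hx hy => rw [map_add, map_add, hx, hy]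
    | inv x _ hx => rw [map_inv₀, map_inv₀, hx]
    | mul x y _ _ hx hy => rw [map_mul, map_mul, hx, hy]
  -- zpow criterion
  have ZIFF : ∀ x y : ℤ, ζ ^ x = ζ ^ y ↔ ((p:ℤ))^m ∣ x - y := by
    intro x y
    have h1 : ζ ^ (x - y) = 1 ↔ ((p^m : ℕ) : ℤ) ∣ x - y := hζ.zpow_eq_one_iff_dvd (x - y)
    rw [zpow_sub₀ hζ0, div_eq_one_iff_eq (zpow_ne_zero _ hζ0), Nat.cast_pow] at h1
    exact h1
  have main : ¬ ∃ y : K, φ a = y ^ p := by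
    rintro ⟨y, hy⟩
    rcases Nat.eq_zero_or_pos e with he0 | hepos
    · -- m = k : K = F
      have hζbot : ζ ∈ Set.range φ := ⟨ζk ^ c₀, by
        rw [map_pow, hc₀, he0, pow_zero, pow_one]⟩
      have htop : (⊤ : IntermediateField F K) ≤ ⊥ := by
        rw [← hadj]
        apply IntermediateField.adjoin_le_iff.mpr
        intro x hx
        rw [Set.mem_singleton_iff] at hx
        subst hx
        exact IntermediateField.mem_bot.mpr hζbot
      obtain ⟨y₀, hy₀⟩ := IntermediateField.mem_bot.mp
        (htop (IntermediateField.mem_top (x := y)))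
      apply hna y₀ 0
      rw [zpow_zero, mul_one]
      apply inj
      rw [map_pow, hy₀, ← hy]
    · -- m > k
      -- Galois setup
      have hζint : IsIntegral F ζ :=
        ⟨X ^ (p^m) - C 1, monic_X_pow_sub_C 1 hpmpos.ne', by
          simp [hζ.pow_eq_one]⟩
      have hsalg : Algebra.adjoin F ({ζ} : Set K) = ⊤ := by
        have h1 := IntermediateField.adjoin_simple_toSubalgebra_of_isAlgebraic hζint.isAlgebraic
        rw [hadj] at h1
        rw [← h1, IntermediateField.top_toSubalgebra]
      have hfne : (X ^ (p^m) - C (1:F)) ≠ 0 := X_pow_sub_C_ne_zero hpmpos 1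
      haveI hsf : Polynomial.IsSplittingField F K (X ^ (p^m) - C 1) := by
        constructor
        · show Splits (Polynomial.map (algebraMap F K) _)
          have hmap : Polynomial.map (algebraMap F K) (X ^ (p^m) - C (1:F))
              = X ^ (p^m) - C (1:K) := by
            simp
          rw [hmap]
          exact X_pow_sub_C_splits_of_isPrimitiveRoot hζ hζ.pow_eq_one
        · rw [eq_top_iff, ← hsalg]
          apply Algebra.adjoin_mono
          intro x hx
          rw [Set.mem_singleton_iff] at hx; subst hx
          rw [Polynomial.mem_rootSet]
          exact ⟨hfne, by simp [hζ.pow_eq_one]⟩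
      haveI : FiniteDimensional F K :=
        Polynomial.IsSplittingField.finiteDimensional K (X ^ (p^m) - C (1:F))
      haveI : IsGalois F K := IsGalois.of_separable_splitting_field
        (Polynomial.separable_X_pow_sub_C 1
          (by rw [Nat.cast_pow]; exact pow_ne_zero m hchar) one_ne_zero)
      classical
      -- exponents of automorphisms
      have hcex : ∀ σ : K ≃ₐ[F] K, ∃ c : ℕ, ζ ^ c = σ ζ ∧ (p:ℤ)^k ∣ (c:ℤ) - 1 := by
        intro σ
        haveI : NeZero (p ^ m) := ⟨hpmpos.ne'⟩
        obtain ⟨c, _, hcζ⟩ := hζ.eq_pow_of_pow_eq_one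
          (show (σ ζ) ^ (p^m) = 1 by rw [← map_pow, hζ.pow_eq_one, map_one])
        refine ⟨c, hcζ, ?_⟩
        have hfix : σ (ζ ^ p ^ e) = ζ ^ p ^ e := by
          rw [← hc₀, map_pow, hφ, AlgEquiv.commutes]
        have hnat : ζ ^ (c * p ^ e) = ζ ^ (p ^ e) := by
          rw [pow_mul, hcζ, ← map_pow, hfix]
        have hzz : ζ ^ ((c:ℤ) * (p:ℤ)^e) = ζ ^ (((p:ℤ))^e) := by
          rw [← zpow_natCast ζ (c * p ^ e), ← zpow_natCast ζ (p ^ e)] at hnat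
          push_cast at hnat
          exact hnat
        obtain ⟨t, ht⟩ := (ZIFF _ _).mp hzz
        refine ⟨t, ?_⟩
        have hpe0 : ((p:ℤ))^e ≠ 0 := pow_ne_zero _ (by exact_mod_cast hp.ne_zero)
        apply mul_right_cancel₀ hpe0
        rw [he, pow_add] at ht
        linear_combination ht
      choose cExp hcspec hcdvd using hcex
      have hpow : ∀ (σ : K ≃ₐ[F] K) (n : ℕ), (σ ^ n) ζ = ζ ^ (cExp σ ^ n) := by
        intro σ n
        induction n with
        | zero => simp
        | succ n ih =>
          rw [pow_succ, AlgEquiv.mul_apply, ← hcspec σ, map_pow, ih, ← pow_mul,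
            ← pow_succ]
      have hexp : ∀ σ : K ≃ₐ[F] K, σ ^ (p ^ e) = 1 := by
        intro σ
        apply AEXT
        rw [hpow, AlgEquiv.one_apply]
        have hd : ((p:ℤ))^m ∣ ((cExp σ : ℤ))^(p^e) - 1 := by
          have h0 := iterInt p k hk (cExp σ : ℤ) (hcdvd σ) e
          rwa [← he] at h0
        have hz : ζ ^ (((cExp σ : ℤ))^(p^e)) = ζ ^ ((1:ℤ)) := (ZIFF _ _).mpr (by simpa using hd)
        have hz2 : ζ ^ ((cExp σ ^ (p^e) : ℕ) : ℤ) = ζ ^ ((1:ℤ)) := by push_cast; exact hz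
        rw [zpow_natCast] at hz2
        simpa using hz2
      haveI : Fintype (K ≃ₐ[F] K) := AlgEquiv.fintype F K
      have hcomm : ∀ σ τ : K ≃ₐ[F] K, σ * τ = τ * σ := by
        intro σ τ
        apply AEXT
        rw [AlgEquiv.mul_apply, AlgEquiv.mul_apply, ← hcspec τ, ← hcspec σ, map_pow, map_pow,
          ← hcspec σ, ← hcspec τ, ← pow_mul, ← pow_mul, mul_comm (cExp τ) (cExp σ)]
      have htor : ∀ s : Finset (K ≃ₐ[F] K), (∀ g ∈ s, g ^ p = 1) → s.card ≤ p := by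
        intro s hs
        have hinj : (↑s : Set (K ≃ₐ[F] K)).InjOn (fun σ => σ ζ) := fun σ _ τ _ h => AEXT σ τ h
        have hmaps : ∀ σ ∈ s, σ ζ ∈ (Finset.range p).image
            (fun t => ζ * (ζ ^ (p ^ (m-1))) ^ t) := by
          intro σ hσ
          have h2 : (p:ℤ)^m ∣ (cExp σ : ℤ)^p - 1 := by
            have h0 := hpow σ p
            rw [hs σ hσ, AlgEquiv.one_apply] at h0
            have hz : ζ ^ (((cExp σ ^ p : ℕ)) : ℤ) = ζ ^ ((1:ℤ)) := by
              rw [zpow_natCast, zpow_one]; exact h0.symm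
            have h3 := (ZIFF _ _).mp hz
            push_cast at h3
            simpa using h3
          obtain ⟨t, ht⟩ := keyInt p k m hp hk hk2 hm _ (hcdvd σ) h2
          have hppos' : (0:ℤ) < (p:ℤ) := by exact_mod_cast hppos
          have htm0 : 0 ≤ t % (p:ℤ) := Int.emod_nonneg t hppos'.ne'
          have htm1 : t % (p:ℤ) < (p:ℤ) := Int.emod_lt_of_pos t hppos'
          have hmm : (p:ℤ)^m = (p:ℤ)^(m-1) * (p:ℤ) := by
            rw [← pow_succ]; congr 1; omega
          refine Finset.mem_image.mpr ⟨(t % (p:ℤ)).toNat, Finset.mem_range.mpr ?_, ?_⟩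
          · have hlt : ((t % (p:ℤ)).toNat : ℤ) < (p:ℤ) := by
              rw [Int.toNat_of_nonneg htm0]; exact htm1
            exact_mod_cast hlt
          · rw [← hcspec σ]
            have hz2 : ζ ^ ((1 + (p:ℤ)^(m-1) * (t % (p:ℤ)))) = ζ ^ ((cExp σ : ℤ)) := by
              apply (ZIFF _ _).mpr
              refine ⟨-(t / (p:ℤ)), ?_⟩
              have hdm := Int.mul_ediv_add_emod t (p:ℤ)
              rw [hmm]
              linear_combination ((p:ℤ)^(m-1)) * hdm - ht
            calc ζ * (ζ ^ (p ^ (m-1))) ^ (t % (p:ℤ)).toNat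
                = ζ ^ ((1 + (p:ℤ)^(m-1) * (t % (p:ℤ)))) := by
                  rw [zpow_add₀ hζ0, zpow_one]
                  congr 1
                  rw [← zpow_natCast (ζ ^ p ^ (m-1)), ← zpow_natCast ζ (p ^ (m-1)), ← zpow_mul]
                  rw [Int.toNat_of_nonneg htm0]
                  push_cast
                  ring_nf
              _ = ζ ^ ((cExp σ : ℤ)) := hz2
              _ = ζ ^ (cExp σ) := zpow_natCast ζ (cExp σ)
        calc s.card ≤ ((Finset.range p).image (fun t => ζ * (ζ ^ (p ^ (m-1))) ^ t)).card :=
              Finset.card_le_card_of_injOn _ hmaps hinj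
          _ ≤ (Finset.range p).card := Finset.card_image_le
          _ = p := Finset.card_range p
      haveI : IsCyclic (K ≃ₐ[F] K) := cyclic_aux p e hp hcomm hexp htor
      obtain ⟨σ₀, hσ₀⟩ := IsCyclic.exists_monoid_generator (α := K ≃ₐ[F] K)
      have hfix₀ : ∀ z : K, σ₀ z = z → z ∈ Set.range φ := by
        intro z hz
        have hall : ∀ σ : K ≃ₐ[F] K, σ z = z := by
          intro σ
          obtain ⟨n, rfl⟩ := hσ₀ σ
          induction n with
          | zero => simp
          | succ n ih =>
            show (σ₀ ^ (n+1)) z = z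
            rw [pow_succ, AlgEquiv.mul_apply, hz]
            exact ih
        have hmem : z ∈ IntermediateField.fixedField
            (IntermediateField.fixingSubgroup (⊥ : IntermediateField F K)) := by
          intro g
          exact hall g
        rw [IsGalois.fixedField_fixingSubgroup] at hmem
        exact IntermediateField.mem_bot.mp hmem
      have hem1 : p ^ m = p ^ (e-1) * p ^ (k+1) := by rw [← pow_add]; congr 1; omega
      have hξprim : IsPrimitiveRoot (ζ ^ p ^ (e-1)) (p ^ (k+1)) := hζ.pow hpmpos hem1
      set ξ := ζ ^ p ^ (e-1) with hξdef
      have hξ0 : ξ ≠ 0 := pow_ne_zero _ hζ0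
      have hξp : ξ ^ p = ζ ^ p ^ e := by
        rw [hξdef, ← pow_mul, ← pow_succ]
        congr 2
        omega
      have hξnr : ξ ∉ Set.range φ := by
        rintro ⟨x, hx⟩
        apply hnok1
        refine ⟨x, ?_⟩
        have hxprim : IsPrimitiveRoot (φ x) (p ^ (k+1)) := by rw [hx]; exact hξprim
        exact hxprim.of_map_of_injective inj
      have hy0 : y ≠ 0 := by
        rintro rfl
        rw [zero_pow hp.pos.ne'] at hy
        exact ha ((map_eq_zero_iff φ inj).mp hy)
      set ω := σ₀ ξ * ξ⁻¹ with hωdef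
      have hσξ : σ₀ ξ = ω * ξ := by rw [hωdef, inv_mul_cancel_right₀ hξ0]
      have hξpfix : σ₀ (ξ ^ p) = ξ ^ p := by
        rw [hξp, ← hc₀, map_pow, hφ, AlgEquiv.commutes]
      set η := σ₀ y * y⁻¹ with hηdef
      have hσy : σ₀ y = η * y := by rw [hηdef, inv_mul_cancel_right₀ hy0]
      have hηp : η ^ p = 1 := by
        have hyfix : σ₀ (y ^ p) = y ^ p := by
          rw [← hy, hφ, AlgEquiv.commutes]
        rw [hηdef, mul_pow, inv_pow, ← map_pow, hyfix,
          mul_inv_cancel₀ (pow_ne_zero _ hy0)]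
      have hωp : ω ^ p = 1 := by
        rw [hωdef, mul_pow, inv_pow, ← map_pow, hξpfix,
          mul_inv_cancel₀ (pow_ne_zero _ hξ0)]
      have hωne : ω ≠ 1 := by
        intro h1
        exact hξnr (hfix₀ ξ (by rw [hσξ, h1, one_mul]))
      have hωprim : IsPrimitiveRoot ω p := by
        have h1 : orderOf ω ∣ p := orderOf_dvd_of_pow_eq_one hωp
        rcases (Nat.dvd_prime hp).mp h1 with h | h
        · exact absurd (orderOf_eq_one_iff.mp h) hωne
        · rw [← h]; exact IsPrimitiveRoot.orderOf ω
      haveI : NeZero p := ⟨hp.pos.ne'⟩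
      obtain ⟨d, hdlt, hd⟩ := hωprim.eq_pow_of_pow_eq_one hηp
      have hω0 : ω ≠ 0 := by
        intro h0; rw [h0, zero_pow hp.pos.ne'] at hωp; exact zero_ne_one hωp
      have hzfix : σ₀ (y * (ξ ^ d)⁻¹) = y * (ξ ^ d)⁻¹ := by
        rw [map_mul, map_inv₀, map_pow, hσξ, hσy, ← hd]
        field_simp
        ring
      obtain ⟨z₀, hz₀⟩ := hfix₀ _ hzfix
      apply hna z₀ ((c₀ * d : ℕ) : ℤ)
      rw [zpow_natCast]
      apply inj
      rw [map_mul, map_pow, map_pow, hz₀, hy]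
      have h1 : (φ ζk) ^ (c₀ * d) = (ξ ^ d) ^ p := by
        rw [← pow_mul ξ d p, mul_comm d p, pow_mul ξ p d, hξp, ← hc₀, ← pow_mul]
      rw [h1]
      field_simp
      rw [div_pow, div_mul_cancel₀ _ (pow_ne_zero _ (pow_ne_zero _ hξ0))]
  refine ⟨main, ?_⟩
  rintro hp2 ⟨y, hy⟩
  subst hp2
  have hk2' := hk2 rfl
  have hi : IsPrimitiveRoot (ζk ^ 2 ^ (k - 2)) 4 :=
    hζk.pow hpkpos (by rw [show k = (k-2)+2 by omega, pow_add]; norm_num)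
  set i₀ := ζk ^ 2 ^ (k - 2) with hi₀
  have hi2 : i₀ ^ 2 = -1 := by
    have h4 : (i₀ ^ 2) ^ 2 = 1 := by rw [← pow_mul]; exact hi.pow_eq_one
    have hne : i₀ ^ 2 ≠ 1 := hi.pow_ne_one_of_pos_of_lt (by norm_num) (by norm_num)
    rcases mul_eq_zero.mp (show (i₀^2 - 1) * (i₀^2 + 1) = 0 by linear_combination h4) with h | h
    · exact absurd (by linear_combination h) hne
    · linear_combination h
  apply main
  refine ⟨((1 + φ i₀) * y) ^ 2, ?_⟩
  have hi2K : (φ i₀) ^ 2 = -1 := by rw [← map_pow, hi2, map_neg, map_one]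
  rw [hy]
  linear_combination (-(y^4) * ((φ i₀)^2 + 4*(φ i₀) + 5)) * hi2K
end

section
/- Let F be a field of characteristic ≠ p containing ζ_{p^k} but not ζ_{p^{k+1}} (ζ₄ ∈ F if p=2), m ≥ k, and a ∈ F^× with [a] ∉ ⟨[ζ_{p^k}]⟩ in F^×/(F^×)^p. Then the Galois group Gal(F(a^{1/p^m}, ζ_{p^m})/F) is abelian if and only if m ≤ k. -/
open Polynomial

set_option maxHeartbeats 1000000

set_option maxHeartbeats 1000000 in
theorem stmt13aux (p m : ℕ) (hp : p.Prime)
    (F : Type*) [Field F] (hchar : (p : F) ≠ 0)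
    (a : F) (ha : a ≠ 0)
    (K : Type*) [Field K] [Algebra F K]
    (ζ : K) (hζ : IsPrimitiveRoot ζ (p ^ m))
    (α : K) (hα : α ^ p ^ m = algebraMap F K a)
    (hadj : IntermediateField.adjoin F {ζ, α} = ⊤) :
    ∀ x : K, (∀ σ : K ≃ₐ[F] K, σ x = x) → ∃ y, algebraMap F K y = x := by
  have hinj : Function.Injective (algebraMap F K) := (algebraMap F K).injective
  have hpm0 : (0:ℕ) < p ^ m := pow_pos hp.pos m
  have ha' : algebraMap F K a ≠ 0 := fun h => ha (hinj (by simpa using h))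
  have hα0 : α ≠ 0 := by
    intro h
    apply ha'
    rw [← hα, h, zero_pow hpm0.ne']
  have hpmF : ((p ^ m : ℕ) : F) ≠ 0 := by
    push_cast
    exact pow_ne_zero _ hchar
  have hsep : (X ^ (p ^ m) - C a).Separable := Polynomial.separable_X_pow_sub_C a hpmF ha
  have hsplit : ((X ^ (p ^ m) - C a).map (algebraMap F K)).Splits := by
    have : (X ^ (p ^ m) - C a).map (algebraMap F K)
        = X ^ (p ^ m) - C (algebraMap F K a) := by
      simp [Polynomial.map_pow]
    rw [this]
    exact X_pow_sub_C_splits_of_isPrimitiveRoot hζ hα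
  have hne : (X ^ (p ^ m) - C a) ≠ 0 := X_pow_sub_C_ne_zero hpm0 a
  have hαroot : α ∈ (X ^ (p ^ m) - C a).rootSet K := by
    rw [Polynomial.mem_rootSet]
    exact ⟨hne, by simp [hα]⟩
  have hζαroot : ζ * α ∈ (X ^ (p ^ m) - C a).rootSet K := by
    rw [Polynomial.mem_rootSet]
    refine ⟨hne, by simp [mul_pow, hζ.pow_eq_one, hα]⟩
  have hsf : (X ^ (p ^ m) - C a).IsSplittingField F K := by
    rw [isSplittingField_iff_intermediateField]
    refine ⟨hsplit, ?_⟩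
    rw [eq_top_iff, ← hadj, IntermediateField.adjoin_le_iff]
    have h2 : α ∈ IntermediateField.adjoin F ((X ^ (p ^ m) - C a).rootSet K) :=
      IntermediateField.subset_adjoin F _ hαroot
    have h3 : ζ * α ∈ IntermediateField.adjoin F ((X ^ (p ^ m) - C a).rootSet K) :=
      IntermediateField.subset_adjoin F _ hζαroot
    rintro x (rfl | rfl)
    · have h1 := mul_mem h3 (inv_mem h2)
      rwa [mul_assoc, mul_inv_cancel₀ hα0, mul_one] at h1
    · exact h2
  haveI := hsf
  haveI : FiniteDimensional F K := Polynomial.IsSplittingField.finiteDimensional K (X ^ (p ^ m) - C a)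
  haveI : IsGalois F K := IsGalois.of_separable_splitting_field hsep
  intro x hx
  have hx' : x ∈ IntermediateField.fixedField (⊤ : Subgroup (K ≃ₐ[F] K)) := by
    rintro ⟨σ, -⟩; exact hx σ
  rw [← IntermediateField.fixingSubgroup_bot (F := F) (E := K), IsGalois.fixedField_fixingSubgroup ⊥,
    IntermediateField.mem_bot] at hx'
  exact hx'

theorem stmt_13 (p k : ℕ) (hp : p.Prime) (hk : 1 ≤ k)
    (F : Type*) [Field F] (hchar : (p : F) ≠ 0) (hk2 : p = 2 → 2 ≤ k)
    (ζk : F) (hζk : IsPrimitiveRoot ζk (p ^ k))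
    (hnok1 : ¬ ∃ ζ : F, IsPrimitiveRoot ζ (p ^ (k + 1)))
    (a : F) (ha : a ≠ 0)
    (hna : ∀ (f : F) (b : ℤ), a ≠ f ^ p * ζk ^ b)
    (m : ℕ) (hm : 1 ≤ m)
    (K : Type*) [Field K] [Algebra F K]
    (ζ : K) (hζ : IsPrimitiveRoot ζ (p ^ m))
    (α : K) (hα : α ^ p ^ m = algebraMap F K a)
    (hadj : IntermediateField.adjoin F {ζ, α} = ⊤) :
    (∀ g h : K ≃ₐ[F] K, g * h = h * g) ↔ m ≤ k := by
  have hinj : Function.Injective (algebraMap F K) := (algebraMap F K).injective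
  have hpm0 : (0:ℕ) < p ^ m := pow_pos hp.pos m
  have hpk0 : (0:ℕ) < p ^ k := pow_pos hp.pos k
  haveI : NeZero (p ^ m) := ⟨hpm0.ne'⟩
  haveI : NeZero (p ^ k) := ⟨hpk0.ne'⟩
  have ha' : algebraMap F K a ≠ 0 := fun h => ha (hinj (by simpa using h))
  have hα0 : α ≠ 0 := by
    intro h
    apply ha'
    rw [← hα, h, zero_pow hpm0.ne']
  have hζ0 : ζ ≠ 0 := hζ.ne_zero hpm0.ne'
  -- basic exponent arithmetic helpers
  have hdvd_of_eq : ∀ x y : ℤ, ζ ^ x = ζ ^ y → ((p:ℤ))^m ∣ x - y := by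
    intro x y hxy
    have h1 : ζ ^ (x - y) = 1 := by
      rw [zpow_sub₀ hζ0, hxy, div_self (zpow_ne_zero _ hζ0)]
    have := (hζ.zpow_eq_one_iff_dvd (x - y)).mp h1
    simpa [Nat.cast_pow] using this
  have heq_of_dvd : ∀ x y : ℤ, ((p:ℤ))^m ∣ x - y → ζ ^ x = ζ ^ y := by
    intro x y hxy
    have h1 : ζ ^ (x - y) = 1 := by
      rw [hζ.zpow_eq_one_iff_dvd]
      simpa [Nat.cast_pow] using hxy
    rw [zpow_sub₀ hζ0] at h1
    exact (div_eq_one_iff_eq (zpow_ne_zero _ hζ0)).mp h1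
  -- exponents of automorphisms on α and ζ
  have hcex : ∀ σ : K ≃ₐ[F] K, ∃ c : ℕ, σ α = ζ ^ c * α := by
    intro σ
    have h1 : (σ α / α) ^ (p ^ m) = 1 := by
      rw [div_pow, ← map_pow, hα, AlgEquiv.commutes, div_self ha']
    obtain ⟨i, _, hi⟩ := hζ.eq_pow_of_pow_eq_one h1
    exact ⟨i, by rw [hi, div_mul_cancel₀ _ hα0]⟩
  have hdex : ∀ σ : K ≃ₐ[F] K, ∃ d : ℕ, σ ζ = ζ ^ d := by
    intro σ
    have h1 : (σ ζ) ^ (p ^ m) = 1 := by rw [← map_pow, hζ.pow_eq_one, map_one]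
    obtain ⟨i, _, hi⟩ := hζ.eq_pow_of_pow_eq_one h1
    exact ⟨i, hi.symm⟩
  choose c hc using hcex
  choose d hd using hdex
  constructor
  · -- abelian → m ≤ k
    intro hab
    by_contra hcon
    push_neg at hcon
    have hkm : k + 1 ≤ m := hcon
    have hfix : ∀ x : K, (∀ σ : K ≃ₐ[F] K, σ x = x) → ∃ y, algebraMap F K y = x :=
      stmt13aux p m hp F hchar a ha K ζ hζ α hα hadj
    -- d σ ≡ 1 mod p^k
    have hdk : ∀ σ : K ≃ₐ[F] K, ((p:ℤ))^k ∣ (d σ : ℤ) - 1 := by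
      intro σ
      have hpk : IsPrimitiveRoot (ζ ^ p ^ (m - k)) (p ^ k) :=
        hζ.pow hpm0 (by rw [← pow_add, Nat.sub_add_cancel (le_of_lt hcon)])
      have hζkK : IsPrimitiveRoot (algebraMap F K ζk) (p ^ k) := hζk.map_of_injective hinj
      obtain ⟨i, _, hi⟩ := hζkK.eq_pow_of_pow_eq_one hpk.pow_eq_one
      have hfixk : σ (ζ ^ p ^ (m - k)) = ζ ^ p ^ (m - k) := by
        rw [← hi, ← map_pow, AlgEquiv.commutes]
      rw [map_pow, hd σ, ← pow_mul] at hfixk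
      have := hdvd_of_eq ((d σ : ℤ) * (p ^ (m - k) : ℕ)) ((p ^ (m - k) : ℕ) : ℤ)
        (by push_cast [← zpow_natCast] at hfixk ⊢; exact_mod_cast hfixk)
      have h2 : ((p:ℤ))^m ∣ ((d σ : ℤ) - 1) * (p:ℤ) ^ (m - k) := by
        convert this using 1
        push_cast
        ring
      have h3 : ((p:ℤ))^k * ((p:ℤ))^(m-k) ∣ ((d σ : ℤ) - 1) * (p:ℤ) ^ (m - k) := by
        rw [← pow_add, Nat.add_sub_cancel' (le_of_lt hcon)]
        exact h2
      exact (mul_dvd_mul_iff_right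
        (pow_ne_zero (m-k) (Int.natCast_ne_zero.mpr hp.pos.ne') : ((p:ℤ))^(m-k) ≠ 0)).mp h3
    -- existence of τ moving ζ_{p^{k+1}}
    have hτex : ∃ τ : K ≃ₐ[F] K, ¬ ((p:ℤ))^(k+1) ∣ (d τ : ℤ) - 1 := by
      by_contra hno
      push_neg at hno
      have hallfix : ∀ σ : K ≃ₐ[F] K, σ (ζ ^ p ^ (m - (k+1))) = ζ ^ p ^ (m - (k+1)) := by
        intro σ
        rw [map_pow, hd σ, ← pow_mul]
        have : ((p:ℤ))^m ∣ ((d σ : ℤ) * (p ^ (m - (k+1)) : ℕ)) - ((p ^ (m - (k+1)) : ℕ) : ℤ) := by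
          have h2 : ((p:ℤ))^(k+1) * ((p:ℤ))^(m-(k+1)) ∣ ((d σ : ℤ) - 1) * (p:ℤ)^(m-(k+1)) :=
            mul_dvd_mul (hno σ) dvd_rfl
          rw [← pow_add, Nat.add_sub_cancel' hkm] at h2
          convert h2 using 1
          push_cast
          ring
        have := heq_of_dvd _ _ this
        push_cast [← zpow_natCast] at this ⊢
        exact_mod_cast this
      obtain ⟨y, hy⟩ := hfix _ hallfix
      apply hnok1
      refine ⟨y, ?_⟩
      have hprim : IsPrimitiveRoot (ζ ^ p ^ (m - (k+1))) (p ^ (k+1)) :=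
        hζ.pow hpm0 (by rw [← pow_add, Nat.sub_add_cancel hkm])
      rw [← hy] at hprim
      exact hprim.of_map_of_injective hinj
    obtain ⟨τ, hτ⟩ := hτex
    obtain ⟨u, hu⟩ := hdk τ
    have hpu : ¬ ((p:ℤ)) ∣ u := by
      intro hdvd
      obtain ⟨v, rfl⟩ := hdvd
      exact hτ ⟨v, by rw [hu]; ring⟩
    have hcop : IsCoprime ((p:ℤ)^m) u :=
      ((Nat.prime_iff_prime_int.mp hp).coprime_iff_not_dvd.mpr hpu).pow_left
    obtain ⟨x, v, hxv⟩ := id hcop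
    -- commutation relation
    have hrel : ∀ σ : K ≃ₐ[F] K,
        ((p:ℤ))^m ∣ ((d σ : ℤ) - 1) * (c τ : ℤ) - ((d τ : ℤ) - 1) * (c σ : ℤ) := by
      intro σ
      have h1 : σ (τ α) = ζ ^ ((d σ : ℤ) * (c τ : ℤ) + (c σ : ℤ)) * α := by
        rw [hc τ, map_mul, map_pow, hd σ, hc σ, ← pow_mul]
        rw [zpow_add₀ hζ0, ← zpow_natCast ζ (d σ * c τ), ← zpow_natCast ζ (c σ)]
        push_cast
        ring
      have h2 : τ (σ α) = ζ ^ ((d τ : ℤ) * (c σ : ℤ) + (c τ : ℤ)) * α := by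
        rw [hc σ, map_mul, map_pow, hd τ, hc τ, ← pow_mul]
        rw [zpow_add₀ hζ0, ← zpow_natCast ζ (d τ * c σ), ← zpow_natCast ζ (c τ)]
        push_cast
        ring
      have h3 : σ (τ α) = τ (σ α) := by
        rw [← AlgEquiv.mul_apply, ← AlgEquiv.mul_apply, hab σ τ]
      rw [h1, h2] at h3
      have h4 := hdvd_of_eq _ _ (mul_right_cancel₀ hα0 h3)
      convert h4 using 1
      ring
    -- the invariant element δ
    set t : ℤ := -(c τ : ℤ) * v with ht
    have hut : ((p:ℤ))^m ∣ u * t + (c τ : ℤ) := by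
      refine ⟨x * (c τ : ℤ), ?_⟩
      have : v * u = 1 - x * (p:ℤ)^m := by linarith [hxv]
      rw [ht]
      calc u * (-(c τ : ℤ) * v) + (c τ : ℤ)
          = (c τ : ℤ) * (1 - v * u) := by ring
        _ = (p:ℤ)^m * (x * (c τ : ℤ)) := by rw [this]; ring
    have hfixδ : ∀ σ : K ≃ₐ[F] K, σ (α ^ p ^ k * ζ ^ t) = α ^ p ^ k * ζ ^ t := by
      intro σ
      have hσδ : σ (α ^ p ^ k * ζ ^ t) = ζ ^ (((c σ * p ^ k : ℕ) : ℤ) + (d σ : ℤ) * t) * α ^ p ^ k := by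
        rw [map_mul, map_pow, hc σ, map_zpow₀, hd σ, ← zpow_natCast ζ (d σ), ← zpow_mul,
          mul_pow, ← pow_mul, ← zpow_natCast ζ (c σ * p ^ k), zpow_add₀ hζ0]
        ring
      have key : ((p:ℤ))^m ∣ ((c σ * p ^ k : ℕ) : ℤ) + (d σ : ℤ) * t - t := by
        have hX : ((p:ℤ))^m ∣ u * (((c σ * p ^ k : ℕ) : ℤ) + (d σ : ℤ) * t - t) := by
          have e1 : u * (((c σ * p ^ k : ℕ) : ℤ) + (d σ : ℤ) * t - t)
              = -(((d σ : ℤ) - 1) * (c τ : ℤ) - ((d τ : ℤ) - 1) * (c σ : ℤ))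
                + ((d σ : ℤ) - 1) * (u * t + (c τ : ℤ)) := by
            rw [hu]
            push_cast
            ring
          rw [e1]
          exact dvd_add (dvd_neg.mpr (hrel σ)) (Dvd.dvd.mul_left hut _)
        exact hcop.dvd_of_dvd_mul_left hX
      rw [hσδ, heq_of_dvd _ _ key]
      ring
    obtain ⟨y, hy⟩ := hfix _ hfixδ
    have hy0 : y ≠ 0 := by
      intro h
      rw [h, map_zero] at hy
      exact (mul_ne_zero (pow_ne_zero _ hα0) (zpow_ne_zero _ hζ0)) hy.symm
    -- δ ^ (p ^ (m - k)) = a * ζ ^ (t * p^(m-k))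
    have hmk : k ≤ m := le_of_lt hcon
    have hδpow : algebraMap F K (y ^ p ^ (m - k))
        = algebraMap F K a * ζ ^ (t * ((p ^ (m - k) : ℕ) : ℤ)) := by
      rw [map_pow, hy, mul_pow, ← pow_mul, mul_comm (p ^ k) (p ^ (m - k)),
        ← pow_add, Nat.sub_add_cancel hmk, hα, ← zpow_natCast (ζ ^ t), ← zpow_mul]
    set r : F := y ^ p ^ (m - k) / a with hr
    have hrK : algebraMap F K r = ζ ^ (t * ((p ^ (m - k) : ℕ) : ℤ)) := by
      rw [hr, map_div₀, hδpow]
      field_simp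
    have hrpow : r ^ p ^ k = 1 := by
      apply hinj
      rw [map_pow, hrK, map_one, ← zpow_natCast, ← zpow_mul]
      rw [hζ.zpow_eq_one_iff_dvd]
      push_cast
      refine ⟨t, ?_⟩
      rw [mul_assoc, ← pow_add, Nat.sub_add_cancel hmk]
      ring
    obtain ⟨b, _, hb⟩ := hζk.eq_pow_of_pow_eq_one hrpow
    have hr0 : r ≠ 0 := by
      rw [hr]
      exact div_ne_zero (pow_ne_zero _ hy0) ha
    -- a = (y ^ p^(m-k-1)) ^ p * ζk ^ (-b)
    have hyk : (y ^ p ^ (m - k - 1)) ^ p = y ^ p ^ (m - k) := by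
      rw [← pow_mul, ← pow_succ]
      congr 2
      omega
    have har : a * r = y ^ p ^ (m - k) := by
      rw [hr]
      field_simp
    apply hna (y ^ p ^ (m - k - 1)) (-(b : ℤ))
    rw [zpow_neg, zpow_natCast, hb, hyk, ← har, mul_inv_cancel_right₀ hr0]
  · -- m ≤ k → abelian
    intro hmk g h
    have hζkK : IsPrimitiveRoot (algebraMap F K ζk) (p ^ k) := hζk.map_of_injective hinj
    have hζpow : ζ ^ p ^ k = 1 := by
      rw [← Nat.sub_add_cancel hmk, pow_add, pow_mul', hζ.pow_eq_one, one_pow]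
    obtain ⟨i, _, hi⟩ := hζkK.eq_pow_of_pow_eq_one hζpow
    have hζfix : ∀ σ : K ≃ₐ[F] K, σ ζ = ζ := by
      intro σ
      rw [← hi, ← map_pow, AlgEquiv.commutes]
    refine AlgEquiv.ext fun z => ?_
    have hz : z ∈ IntermediateField.adjoin F ({ζ, α} : Set K) := by
      rw [hadj]; exact IntermediateField.mem_top
    induction hz using IntermediateField.adjoin_induction with
    | mem w hw =>
      rcases hw with rfl | rfl
      · simp only [AlgEquiv.mul_apply, hζfix g, hζfix h]
      · simp only [AlgEquiv.mul_apply, hc g, hc h, map_mul, map_pow, hζfix g, hζfix h]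
        ring
    | algebraMap w => simp only [AlgEquiv.mul_apply, AlgEquiv.commutes]
    | add w₁ w₂ _ _ h1 h2 =>
      simp only [AlgEquiv.mul_apply, map_add] at h1 h2 ⊢
      rw [h1, h2]
    | inv w _ h1 =>
      simp only [AlgEquiv.mul_apply, map_inv₀] at h1 ⊢
      rw [h1]
    | mul w₁ w₂ _ _ h1 h2 =>
      simp only [AlgEquiv.mul_apply, map_mul] at h1 h2 ⊢
      rw [h1, h2]
end

section
/- Let p be an odd prime and k, m positive integers with m ≥ k. Let G = ⟨σ, τ ∣ τ^{p^m} = σ^{p^{m−k}} = 1, στσ⁻¹ = τ^{p^k+1}⟩. Then for each n ≥ 1, the n-th term of the p-Zassenhaus filtration of G equals G^{p^s}, where s is the unique integer with p^{s−1} < n ≤ p^s. -/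
/-- The `p`-Zassenhaus filtration: `G_(1) = G` and
`G_(n) = (G_(⌈n/p⌉))^p ∏_{i+j=n} [G_(i), G_(j)]` (as the subgroup generated by these). -/
noncomputable def zassenhaus (p : ℕ) (hp : 2 ≤ p) (G : Type*) [Group G] (n : ℕ) : Subgroup G :=
  Nat.strongRecOn n (fun n ih =>
    if h : n ≤ 1 then ⊤
    else
      Subgroup.closure ((fun g => g ^ p) ''
        ((ih ((n + p - 1) / p) (by
          have hlt : n + p - 1 < n * p := by
            obtain ⟨a, rfl⟩ : ∃ a, n = a + 2 := ⟨n - 2, by omega⟩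
            obtain ⟨b, rfl⟩ : ∃ b, p = b + 2 := ⟨p - 2, by omega⟩
            have hmul : (a + 2) * (b + 2) = a * b + 2 * a + 2 * b + 4 := by ring
            omega
          exact (Nat.div_lt_iff_lt_mul (by omega)).mpr hlt) : Subgroup G) : Set G)) ⊔
      ⨆ (i : ℕ) (j : ℕ) (hij : i + j = n ∧ 0 < i ∧ 0 < j),
        ⁅ih i (by omega), ih j (by omega)⁆)

theorem DZ_zass_def (p : ℕ) (hp : 2 ≤ p) (G : Type*) [Group G] (n : ℕ) :
    zassenhaus p hp G n = if n ≤ 1 then ⊤ else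
      Subgroup.closure ((fun g => g ^ p) '' (zassenhaus p hp G ((n + p - 1) / p) : Set G)) ⊔
      ⨆ (i : ℕ) (j : ℕ) (_ : i + j = n ∧ 0 < i ∧ 0 < j),
        ⁅zassenhaus p hp G i, zassenhaus p hp G j⁆ := by
  rw [zassenhaus, Nat.strongRecOn_eq]
  rfl

namespace DZ

/-- geometric sum `1 + w + ... + w^(n-1)` -/
def geo (w : ℕ) : ℕ → ℕ
  | 0 => 0
  | n+1 => 1 + w * geo w n

lemma geo_add (w x y : ℕ) : geo w (x + y) = geo w x + w ^ x * geo w y := by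
  induction x with
  | zero => simp [geo]
  | succ x ihx =>
      have : x + 1 + y = (x + y) + 1 := by omega
      rw [this, geo, ihx, geo]
      ring

lemma geo_one (w : ℕ) : geo w 1 = 1 := by simp [geo]

lemma geo_succ' (w n : ℕ) : geo w (n + 1) = geo w n + w ^ n := by
  rw [geo_add, geo_one, mul_one]

lemma geo_mul (w a b : ℕ) : geo w (a * b) = geo w a * geo (w ^ a) b := by
  induction b with
  | zero => simp [geo]
  | succ b ihb =>
      have h1 : a * (b + 1) = a * b + a := by ring
      rw [h1, geo_add, ihb, geo_succ', pow_mul]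
      ring

/-- binomial step: if `w ≡ 1 [p^j]`, `j ≥ 1`, then `w^p ≡ 1 [p^(j+1)]`. -/
lemma pow_p_step {p j t : ℕ} (hp : 2 ≤ p) (hj : 1 ≤ j) :
    ∃ t', (1 + p ^ j * t) ^ p = 1 + p ^ (j + 1) * t' := by
  set x := p ^ j * t with hx
  have h := add_pow x 1 p
  rw [Finset.sum_range_succ'] at h
  simp only [one_pow, mul_one, pow_zero, Nat.choose_zero_right, one_mul] at h
  have hdvd : p ^ (j + 1) ∣ ∑ i ∈ Finset.range p, x ^ (i + 1) * p.choose (i + 1) := by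
    refine Finset.dvd_sum fun i hi => ?_
    rcases Nat.eq_zero_or_pos i with hi0 | hi0
    · subst hi0
      have : p.choose 1 = p := Nat.choose_one_right p
      rw [this, pow_one, hx]
      refine ⟨t, by ring⟩
    · have h1 : p ^ (j * (i + 1)) ∣ x ^ (i + 1) := by
        rw [hx, mul_pow, ← pow_mul]
        exact Dvd.dvd.mul_right dvd_rfl _
      have h2 : p ^ (j + 1) ∣ p ^ (j * (i + 1)) := by
        refine pow_dvd_pow p ?_
        have : 2 * j ≤ j * (i + 1) := by nlinarith
        omega
      exact dvd_mul_of_dvd_left (h2.trans h1) _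
  obtain ⟨c, hc⟩ := hdvd
  refine ⟨c, ?_⟩
  rw [add_comm x 1] at h
  simp only [Nat.cast_id] at h hc
  omega

lemma pow_pow {p kk t : ℕ} (hp : 2 ≤ p) (hk : 1 ≤ kk) (r : ℕ) :
    ∃ t', (1 + p ^ kk * t) ^ p ^ r = 1 + p ^ (kk + r) * t' := by
  induction r with
  | zero => exact ⟨t, by simp⟩
  | succ r ihr =>
      obtain ⟨t', ht'⟩ := ihr
      obtain ⟨t'', ht''⟩ := pow_p_step (t := t') hp (show 1 ≤ kk + r by omega)
      refine ⟨t'', ?_⟩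
      rw [pow_succ, pow_mul, ht', ht'']
      ring_nf

lemma u_pow {p kk : ℕ} (c : ℕ) : ∃ t, (p ^ kk + 1) ^ c = 1 + p ^ kk * t := by
  induction c with
  | zero => exact ⟨0, by simp⟩
  | succ c ihc =>
      obtain ⟨t, ht⟩ := ihc
      exact ⟨t * p ^ kk + t + 1, by rw [pow_succ, ht]; ring⟩

lemma geo_cong {p e t : ℕ} (n : ℕ) : ∃ t', geo (1 + p ^ e * t) n = n + p ^ e * t' := by
  induction n with
  | zero => exact ⟨0, by simp [geo]⟩
  | succ n ihn =>
      obtain ⟨t', ht'⟩ := ihn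
      exact ⟨t' + t * n + p ^ e * t * t', by rw [geo, ht']; ring⟩

/-- `p^r ∣ 1 + w + ... + w^(p^r - 1)` when `w ≡ 1 [p^kk]`, `kk ≥ 1`. -/
lemma geo_pow_dvd {p kk t : ℕ} (hp : 2 ≤ p) (hk : 1 ≤ kk) (r : ℕ) :
    p ^ r ∣ geo (1 + p ^ kk * t) (p ^ r) := by
  induction r with
  | zero => simp [geo]
  | succ r ihr =>
      have hmul : p ^ (r + 1) = p ^ r * p := by rw [pow_succ]
      rw [hmul, geo_mul]
      obtain ⟨t', ht'⟩ := pow_pow (t := t) hp hk r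
      have hpd : p ∣ geo ((1 + p ^ kk * t) ^ p ^ r) p := by
        rw [ht']
        obtain ⟨t'', ht''⟩ := geo_cong (p := p) (e := kk + r) (t := t') p
        rw [ht'']
        exact dvd_add dvd_rfl ((dvd_pow_self p (show kk + r ≠ 0 by omega)).mul_right t'')
      exact mul_dvd_mul ihr hpd

section Grp

variable {p m k : ℕ}

local notation "G" => PresentedGroup (demushkinRels p m k)
local notation "σ" => (PresentedGroup.of true : G)
local notation "τ" => (PresentedGroup.of false : G)
local notation "u" => p ^ k + 1
local notation "N" => p ^ (m - k)
local notation "M" => p ^ m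

lemma mk_rel_one {r : FreeGroup Bool} (hr : r ∈ demushkinRels p m k) :
    PresentedGroup.mk (demushkinRels p m k) r = 1 :=
  (QuotientGroup.eq_one_iff r).mpr (Subgroup.subset_normalClosure hr)

lemma rel_tau : τ ^ M = 1 := by
  have := mk_rel_one (p := p) (m := m) (k := k) (r := FreeGroup.of false ^ p ^ m)
    (by simp [demushkinRels])
  simp only [map_pow] at this
  exact this

lemma rel_sigma : σ ^ N = 1 := by
  have := mk_rel_one (p := p) (m := m) (k := k) (r := FreeGroup.of true ^ p ^ (m - k))
    (by simp [demushkinRels])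
  simp only [map_pow] at this
  exact this

lemma rel_conj : σ * τ = τ ^ u * σ := by
  have := mk_rel_one (p := p) (m := m) (k := k)
    (r := FreeGroup.of true * FreeGroup.of false * (FreeGroup.of true)⁻¹ *
      (FreeGroup.of false ^ (p ^ k + 1))⁻¹) (by simp [demushkinRels])
  simp only [map_mul, map_inv, map_pow] at this
  rw [mul_inv_eq_one, mul_inv_eq_iff_eq_mul] at this
  exact this

lemma pow_eq_of_mod {H : Type*} [Group H] (g : H) (e : ℕ) (hg : g ^ e = 1) {x y : ℕ}
    (h : x % e = y % e) : g ^ x = g ^ y := by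
  have hx : g ^ x = g ^ (x % e) := by
    conv_lhs => rw [← Nat.div_add_mod x e]
    rw [pow_add, pow_mul, hg, one_pow, one_mul]
  have hy : g ^ y = g ^ (y % e) := by
    conv_lhs => rw [← Nat.div_add_mod y e]
    rw [pow_add, pow_mul, hg, one_pow, one_mul]
  rw [hx, hy, h]

lemma tau_mod {x y : ℕ} (h : x % M = y % M) : τ ^ x = τ ^ y :=
  pow_eq_of_mod _ _ rel_tau h

lemma swap1 (b : ℕ) : σ * τ ^ b = τ ^ (b * u) * σ := by
  induction b with
  | zero => simp
  | succ b ihb =>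
      rw [pow_succ, ← mul_assoc, ihb, mul_assoc, rel_conj, ← mul_assoc, ← pow_add]
      congr 2
      ring

lemma swap (a b : ℕ) : σ ^ a * τ ^ b = τ ^ (b * u ^ a) * σ ^ a := by
  induction a with
  | zero => simp
  | succ a iha =>
      rw [pow_succ' (PresentedGroup.of true) a, mul_assoc, iha, ← mul_assoc, swap1,
        mul_assoc, ← pow_succ']
      congr 2
      ring

lemma one_add_mul_pow (x t : ℕ) : ∀ a : ℕ, ∃ t', (1 + x * t) ^ a = 1 + x * t' := by
  intro a
  induction a with
  | zero => exact ⟨0, by simp⟩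
  | succ a iha =>
      obtain ⟨t', ht'⟩ := iha
      exact ⟨t' + t + x * t * t', by rw [pow_succ, ht']; ring⟩

lemma u_pow_N (hp : 2 ≤ p) (hk : 1 ≤ k) (hmk : k ≤ m) : ∃ t, u ^ N = 1 + M * t := by
  obtain ⟨t', ht'⟩ := DZ.pow_pow (p := p) (kk := k) (t := 1) hp hk (m - k)
  rw [mul_one] at ht'
  have he : k + (m - k) = m := by omega
  rw [he] at ht'
  refine ⟨t', ?_⟩
  rw [add_comm (p ^ k) 1, ht']

lemma swap' (hp : 2 ≤ p) (hk : 1 ≤ k) (hmk : k ≤ m) (a b : ℕ) :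
    τ ^ b * σ ^ a = σ ^ a * τ ^ (b * u ^ (a * (N - 1))) := by
  rw [swap]
  congr 1
  have hN : 1 ≤ N := Nat.one_le_pow _ _ (by omega)
  have hsum : a * (N - 1) + a = a * N := by
    obtain ⟨N', hN'⟩ : ∃ N', N = N' + 1 := ⟨N - 1, by omega⟩
    rw [hN', Nat.add_sub_cancel]
    ring
  have hexp : b * u ^ (a * (N - 1)) * u ^ a = b * u ^ (a * N) := by
    rw [mul_assoc, ← pow_add, hsum]
  rw [hexp]
  apply tau_mod
  obtain ⟨t, ht⟩ := u_pow_N hp hk hmk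
  obtain ⟨t2, ht2⟩ := one_add_mul_pow M t a
  have : b * u ^ (a * N) = b + (b * t2) * M := by
    rw [show a * N = N * a from mul_comm a N, pow_mul, ht, ht2]
    ring
  rw [this, Nat.add_mul_mod_self_right]

lemma sigma_inv (hp : 2 ≤ p) (a : ℕ) : (σ ^ a)⁻¹ = σ ^ (a * (N - 1)) := by
  have hN : 1 ≤ N := Nat.one_le_pow _ _ (by omega)
  refine (inv_eq_of_mul_eq_one_right ?_).symm.symm
  rw [← pow_add, show a + a * (N - 1) = N * a by
    obtain ⟨N', hN'⟩ : ∃ N', N = N' + 1 := ⟨N - 1, by omega⟩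
    rw [hN', Nat.add_sub_cancel]; ring]
  rw [pow_mul, rel_sigma, one_pow]

lemma tau_inv (hp : 2 ≤ p) (b : ℕ) : (τ ^ b)⁻¹ = τ ^ (b * (M - 1)) := by
  have hM : 1 ≤ M := Nat.one_le_pow _ _ (by omega)
  refine (inv_eq_of_mul_eq_one_right ?_).symm.symm
  rw [← pow_add, show b + b * (M - 1) = M * b by
    obtain ⟨M', hM'⟩ : ∃ M', M = M' + 1 := ⟨M - 1, by omega⟩
    rw [hM', Nat.add_sub_cancel]; ring]
  rw [pow_mul, rel_tau, one_pow]

lemma mul_form (hp : 2 ≤ p) (hk : 1 ≤ k) (hmk : k ≤ m) (a b c d : ℕ) :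
    (σ ^ a * τ ^ b) * (σ ^ c * τ ^ d) =
      σ ^ (a + c) * τ ^ (b * u ^ (c * (N - 1)) + d) := by
  have h := swap' hp hk hmk c b
  calc (σ ^ a * τ ^ b) * (σ ^ c * τ ^ d)
      = σ ^ a * (τ ^ b * σ ^ c) * τ ^ d := by group
    _ = σ ^ a * (σ ^ c * τ ^ (b * u ^ (c * (N - 1)))) * τ ^ d := by rw [h]
    _ = (σ ^ a * σ ^ c) * (τ ^ (b * u ^ (c * (N - 1))) * τ ^ d) := by group
    _ = σ ^ (a + c) * τ ^ (b * u ^ (c * (N - 1)) + d) := by rw [← pow_add, ← pow_add]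

lemma inv_form (hp : 2 ≤ p) (hk : 1 ≤ k) (hmk : k ≤ m) (a b : ℕ) :
    (σ ^ a * τ ^ b)⁻¹ =
      σ ^ (a * (N - 1)) * τ ^ (b * (M - 1) * u ^ ((a * (N - 1)) * (N - 1))) := by
  rw [mul_inv_rev, tau_inv hp, sigma_inv hp, swap' hp hk hmk]

lemma pow_form (hp : 2 ≤ p) (hk : 1 ≤ k) (hmk : k ≤ m) (a b : ℕ) (n : ℕ) :
    (σ ^ a * τ ^ b) ^ n = σ ^ (a * n) * τ ^ (b * DZ.geo (u ^ (a * (N - 1))) n) := by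
  induction n with
  | zero => simp [DZ.geo]
  | succ n ihn =>
      rw [pow_succ, ihn, mul_form hp hk hmk]
      have h1 : a * n + a = a * (n + 1) := by ring
      have h2 : b * DZ.geo (u ^ (a * (N - 1))) n * u ^ (a * (N - 1)) + b
          = b * DZ.geo (u ^ (a * (N - 1))) (n + 1) := by
        rw [show DZ.geo (u ^ (a * (N - 1))) (n + 1) =
          1 + u ^ (a * (N - 1)) * DZ.geo (u ^ (a * (N - 1))) n from rfl]
        ring
      rw [h1, h2]

/-- every element has the normal form `σ^a * τ^b`. -/
def nfSub (hp : 2 ≤ p) (hk : 1 ≤ k) (hmk : k ≤ m) : Subgroup G where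
  carrier := {g : G | ∃ a b : ℕ, g = σ ^ a * τ ^ b}
  one_mem' := ⟨0, 0, by simp⟩
  mul_mem' := by
    rintro x y ⟨a, b, rfl⟩ ⟨c, d, rfl⟩
    exact ⟨a + c, b * u ^ (c * (N - 1)) + d, mul_form hp hk hmk a b c d⟩
  inv_mem' := by
    rintro x ⟨a, b, rfl⟩
    exact ⟨a * (N - 1), b * (M - 1) * u ^ ((a * (N - 1)) * (N - 1)),
      inv_form hp hk hmk a b⟩

lemma nf (hp : 2 ≤ p) (hk : 1 ≤ k) (hmk : k ≤ m) (g : G) :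
    ∃ a b : ℕ, g = σ ^ a * τ ^ b := by
  refine PresentedGroup.generated_by _ (nfSub hp hk hmk) (fun j => ?_) g
  cases j
  · exact ⟨0, 1, by simp⟩
  · exact ⟨1, 0, by simp⟩

/-- the subgroup generated by all `p^s`-th powers. -/
def Hs (s : ℕ) : Subgroup G :=
  Subgroup.closure {x : G | ∃ g : G, g ^ p ^ s = x}

lemma Hs_zero : Hs (p := p) (m := m) (k := k) 0 = ⊤ := by
  rw [eq_top_iff]
  intro x _
  exact Subgroup.subset_closure ⟨x, by rw [pow_zero, pow_one]⟩

lemma Hs_mono {s s' : ℕ} (h : s ≤ s') : Hs (p := p) (m := m) (k := k) s' ≤ Hs s := by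
  rw [Hs, Subgroup.closure_le]
  rintro x ⟨g, rfl⟩
  refine Subgroup.subset_closure ⟨g ^ p ^ (s' - s), ?_⟩
  rw [← pow_mul, ← pow_add]
  have : s' - s + s = s' := by omega
  rw [this]

lemma conj_mem {s : ℕ} {g : G} (hg : g ∈ Hs (p := p) (m := m) (k := k) s) (z : G) :
    z * g * z⁻¹ ∈ Hs (p := p) (m := m) (k := k) s := by
  have hle : (Hs (p := p) (m := m) (k := k) s).map (MulAut.conj z).toMonoidHom ≤ Hs s := by
    rw [Hs, MonoidHom.map_closure]
    apply Subgroup.closure_le _ |>.mpr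
    rintro x ⟨y, ⟨g', rfl⟩, rfl⟩
    exact Subgroup.subset_closure ⟨MulAut.conj z g', (map_pow (MulAut.conj z) g' (p ^ s)).symm⟩
  exact hle ⟨g, hg, rfl⟩

/-- the subgroup of elements `σ^(a p^s) τ^(b p^s)`. -/
def Ks (hp : 2 ≤ p) (hk : 1 ≤ k) (hmk : k ≤ m) (s : ℕ) : Subgroup G where
  carrier := {g : G | ∃ a b : ℕ, g = σ ^ (a * p ^ s) * τ ^ (b * p ^ s)}
  one_mem' := ⟨0, 0, by simp⟩
  mul_mem' := by
    rintro x y ⟨a, b, rfl⟩ ⟨c, d, rfl⟩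
    refine ⟨a + c, b * u ^ ((c * p ^ s) * (N - 1)) + d, ?_⟩
    rw [mul_form hp hk hmk]
    rw [show (a + c) * p ^ s = a * p ^ s + c * p ^ s from by ring,
      show (b * u ^ ((c * p ^ s) * (N - 1)) + d) * p ^ s =
        (b * p ^ s) * u ^ ((c * p ^ s) * (N - 1)) + d * p ^ s from by ring]
  inv_mem' := by
    rintro x ⟨a, b, rfl⟩
    refine ⟨a * (N - 1), b * (M - 1) * u ^ ((a * p ^ s * (N - 1)) * (N - 1)), ?_⟩
    rw [inv_form hp hk hmk]
    rw [show a * (N - 1) * p ^ s = a * p ^ s * (N - 1) from by ring,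
      show b * (M - 1) * u ^ ((a * p ^ s * (N - 1)) * (N - 1)) * p ^ s =
        b * p ^ s * (M - 1) * u ^ (a * p ^ s * (N - 1) * (N - 1)) from by ring]

lemma Ks_le_Hs (hp : 2 ≤ p) (hk : 1 ≤ k) (hmk : k ≤ m) (s : ℕ) :
    Ks hp hk hmk s ≤ Hs (p := p) (m := m) (k := k) s := by
  rintro x ⟨a, b, rfl⟩
  rw [pow_mul, pow_mul]
  exact Subgroup.mul_mem _ (Subgroup.subset_closure ⟨σ ^ a, rfl⟩)
    (Subgroup.subset_closure ⟨τ ^ b, rfl⟩)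

lemma Hs_le_Ks (hp : 2 ≤ p) (hk : 1 ≤ k) (hmk : k ≤ m) (s : ℕ) :
    Hs (p := p) (m := m) (k := k) s ≤ Ks hp hk hmk s := by
  rw [Hs, Subgroup.closure_le]
  rintro x ⟨g, rfl⟩
  obtain ⟨a, b, rfl⟩ := nf hp hk hmk g
  rw [pow_form hp hk hmk]
  obtain ⟨t, ht⟩ := DZ.u_pow (p := p) (kk := k) (a * (N - 1))
  have hdvd : p ^ s ∣ geo (u ^ (a * (N - 1))) (p ^ s) := by
    rw [ht]
    exact DZ.geo_pow_dvd hp hk s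
  obtain ⟨e, he⟩ := hdvd
  exact ⟨a, b * e, by rw [he, show b * (p ^ s * e) = (b * e) * p ^ s from by ring]⟩

lemma pow_p_mem (hp : 2 ≤ p) (hk : 1 ≤ k) (hmk : k ≤ m) {s : ℕ} {x : G}
    (hx : x ∈ Ks hp hk hmk s) : x ^ p ∈ Ks hp hk hmk (s + 1) := by
  obtain ⟨a, b, rfl⟩ := hx
  rw [pow_form hp hk hmk]
  obtain ⟨t, ht⟩ := DZ.u_pow (p := p) (kk := k) (a * (N - 1))
  obtain ⟨t', ht'⟩ := DZ.pow_pow (p := p) (kk := k) (t := t) hp hk s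
  have hW : u ^ (a * p ^ s * (N - 1)) = 1 + p ^ (k + s) * t' := by
    rw [show a * p ^ s * (N - 1) = (a * (N - 1)) * p ^ s from by ring, pow_mul, ht, ht']
  obtain ⟨t'', ht''⟩ := DZ.geo_cong (p := p) (e := k + s) (t := t') p
  refine ⟨a, b + b * p ^ (k + s - 1) * t'', ?_⟩
  rw [hW, ht'']
  congr 1
  · congr 1
    ring
  · congr 1
    have hks : k + s = (k + s - 1) + 1 := by omega
    calc (b * p ^ s) * (p + p ^ (k + s) * t'')
        = b * p ^ s * p + b * p ^ s * p ^ ((k + s - 1) + 1) * t'' := by rw [← hks]; ring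
      _ = (b + b * p ^ (k + s - 1) * t'') * p ^ (s + 1) := by ring

lemma tau_zpow_mem (s : ℕ) {z : ℤ} (hz : ((p : ℤ) ^ s : ℤ) ∣ z) :
    (τ : G) ^ z ∈ Hs (p := p) (m := m) (k := k) s := by
  obtain ⟨w, rfl⟩ := hz
  rw [mul_comm, zpow_mul]
  have : ((p : ℤ) ^ s) = ((p ^ s : ℕ) : ℤ) := by push_cast; ring
  rw [this, zpow_natCast]
  exact Subgroup.subset_closure ⟨τ ^ w, rfl⟩

open scoped commutatorElement in
lemma comm_mem (hp : 2 ≤ p) (hk : 1 ≤ k) (hmk : k ≤ m) {c d s : ℕ} {x y : G}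
    (hx : x ∈ Ks hp hk hmk c) (hy : y ∈ Ks hp hk hmk d) (hs : s ≤ c + d + k) :
    ⁅x, y⁆ ∈ Hs (p := p) (m := m) (k := k) s := by
  obtain ⟨a, b, rfl⟩ := hx
  obtain ⟨a', b', rfl⟩ := hy
  set A := a * p ^ c with hA
  set B := b * p ^ c with hB
  set C := a' * p ^ d with hC
  set D := b' * p ^ d with hD
  set F : ℕ := B * u ^ (C * (N - 1)) + D with hF
  set F' : ℕ := D * u ^ (A * (N - 1)) + B with hF'
  have h1 : (σ ^ A * τ ^ B) * (σ ^ C * τ ^ D) = σ ^ (A + C) * τ ^ F :=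
    mul_form hp hk hmk A B C D
  have h2 : (σ ^ C * τ ^ D) * (σ ^ A * τ ^ B) = σ ^ (A + C) * τ ^ F' := by
    rw [mul_form hp hk hmk, add_comm C A]
  have hcomm : ⁅σ ^ A * τ ^ B, σ ^ C * τ ^ D⁆ =
      σ ^ (A + C) * (τ ^ F * (τ ^ F')⁻¹) * (σ ^ (A + C))⁻¹ := by
    rw [commutatorElement_def]
    have : (σ ^ A * τ ^ B) * (σ ^ C * τ ^ D) * (σ ^ A * τ ^ B)⁻¹ * (σ ^ C * τ ^ D)⁻¹ =
        ((σ ^ A * τ ^ B) * (σ ^ C * τ ^ D)) * ((σ ^ C * τ ^ D) * (σ ^ A * τ ^ B))⁻¹ := by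
      group
    rw [this, h1, h2]
    group
  rw [hcomm]
  -- the middle factor is an integer power of τ with exponent divisible by p^s
  have hmid : τ ^ F * (τ ^ F')⁻¹ ∈ Hs (p := p) (m := m) (k := k) s := by
    have hzp : τ ^ F * (τ ^ F')⁻¹ = (τ : G) ^ ((F : ℤ) - (F' : ℤ)) := by
      rw [zpow_sub, zpow_natCast, zpow_natCast]
    rw [hzp]
    apply tau_zpow_mem
    obtain ⟨t1, ht1⟩ := DZ.u_pow (p := p) (kk := k) (a' * (N - 1))
    obtain ⟨tX, htX⟩ := DZ.pow_pow (p := p) (kk := k) (t := t1) hp hk d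
    have hX : u ^ (C * (N - 1)) = 1 + p ^ (k + d) * tX := by
      rw [hC, show a' * p ^ d * (N - 1) = (a' * (N - 1)) * p ^ d from by ring, pow_mul,
        ht1, htX]
    obtain ⟨t2, ht2⟩ := DZ.u_pow (p := p) (kk := k) (a * (N - 1))
    obtain ⟨tY, htY⟩ := DZ.pow_pow (p := p) (kk := k) (t := t2) hp hk c
    have hY : u ^ (A * (N - 1)) = 1 + p ^ (k + c) * tY := by
      rw [hA, show a * p ^ c * (N - 1) = (a * (N - 1)) * p ^ c from by ring, pow_mul,
        ht2, htY]
    have hdiff : (F : ℤ) - (F' : ℤ) = (p : ℤ) ^ (c + d + k) * ((b : ℤ) * tX - (b' : ℤ) * tY) := by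
      rw [hF, hF', hX, hY, hB, hD]
      push_cast
      ring
    rw [hdiff]
    exact dvd_mul_of_dvd_left (pow_dvd_pow (p : ℤ) hs) _
  exact conj_mem hmid (σ ^ (A + C))

end Grp

end DZ

theorem stmt_14 (p m k : ℕ) (hp : p.Prime) (hpodd : Odd p) (hk : 1 ≤ k) (hmk : k ≤ m) :
    ∀ n s : ℕ, 1 ≤ n → n ≤ p ^ s → (s = 0 ∨ p ^ (s - 1) < n) →
      zassenhaus p hp.two_le (PresentedGroup (demushkinRels p m k)) n =
        Subgroup.closure
          {x : PresentedGroup (demushkinRels p m k) | ∃ g, g ^ p ^ s = x} := by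
  have hp2 : 2 ≤ p := hp.two_le
  have hp3 : 3 ≤ p := by
    rcases hpodd with ⟨r, hr⟩
    omega
  intro n
  induction n using Nat.strong_induction_on with
  | _ n IH =>
    intro s hn1 hns hlow
    show zassenhaus p hp.two_le (PresentedGroup (demushkinRels p m k)) n
        = DZ.Hs (p := p) (m := m) (k := k) s
    rcases le_or_gt n 1 with h1 | h1
    · have hn : n = 1 := by omega
      subst hn
      have hs0 : s = 0 := by
        rcases hlow with h | h
        · exact h
        · have := Nat.one_le_pow (s - 1) p (by omega)
          omega
      subst hs0
      rw [DZ_zass_def, if_pos (le_refl 1), DZ.Hs_zero]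
    · have hs1 : 1 ≤ s := by
        by_contra hcon
        have hzz : s = 0 := by omega
        subst hzz
        rw [pow_zero] at hns
        omega
      rw [DZ_zass_def, if_neg (by omega)]
      have hprod : p ^ (s - 1) * p = p ^ s := by
        rw [← pow_succ]
        congr 1
        omega
      set n' := (n + p - 1) / p with hn'
      have hb1 : 1 ≤ n' := by
        rw [hn', Nat.one_le_div_iff (by omega)]
        omega
      have hb2 : n' < n := by
        rw [hn', Nat.div_lt_iff_lt_mul (by omega)]
        obtain ⟨a, ha⟩ : ∃ a, n = a + 2 := ⟨n - 2, by omega⟩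
        obtain ⟨b2, hb⟩ : ∃ b2, p = b2 + 2 := ⟨p - 2, by omega⟩
        rw [ha, hb]
        have hmul : (a + 2) * (b2 + 2) = a * b2 + 2 * a + 2 * b2 + 4 := by ring
        omega
      have hb3 : n' ≤ p ^ (s - 1) := by
        have h' : (n + p - 1) / p ≤ (p - 1 + p ^ (s - 1) * p) / p :=
          Nat.div_le_div_right (by omega)
        rw [Nat.add_mul_div_right _ _ (show 0 < p by omega),
          Nat.div_eq_of_lt (show p - 1 < p by omega)] at h'
        omega
      have hb4 : s - 1 = 0 ∨ p ^ (s - 1 - 1) < n' := by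
        rcases le_or_gt s 1 with hs | hs
        · left; omega
        · right
          rcases hlow with h | h
          · omega
          have hq : p ^ (s - 1 - 1) * p = p ^ (s - 1) := by
            rw [← pow_succ]; congr 1; omega
          have hle : (p ^ (s - 1 - 1) + 1) * p ≤ n + p - 1 := by
            have expand : (p ^ (s - 1 - 1) + 1) * p = p ^ (s - 1 - 1) * p + p := by ring
            omega
          have h2 := Nat.div_le_div_right (c := p) hle
          rw [Nat.mul_div_cancel _ (show 0 < p by omega)] at h2
          omega
      have hrec := IH n' hb2 (s - 1) hb1 hb3 hb4
      apply le_antisymm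
      · apply sup_le
        · rw [Subgroup.closure_le]
          rintro x2 ⟨y, hy, rfl⟩
          rw [hrec] at hy
          have hyK := DZ.Hs_le_Ks hp2 hk hmk (s - 1) hy
          have hpow := DZ.pow_p_mem hp2 hk hmk hyK
          rw [show s - 1 + 1 = s by omega] at hpow
          exact DZ.Ks_le_Hs hp2 hk hmk s hpow
        · apply iSup_le; intro i
          apply iSup_le; intro j
          apply iSup_le; rintro ⟨hij, hi, hj⟩
          have hilow : Nat.clog p i = 0 ∨ p ^ (Nat.clog p i - 1) < i := by
            rcases Nat.lt_or_ge i 2 with hi2 | hi2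
            · left
              have hi1 : i = 1 := by omega
              rw [hi1, Nat.clog_one_right]
            · right
              exact Nat.pow_pred_clog_lt_self (by omega) (by omega)
          have hjlow : Nat.clog p j = 0 ∨ p ^ (Nat.clog p j - 1) < j := by
            rcases Nat.lt_or_ge j 2 with hj2 | hj2
            · left
              have hj1 : j = 1 := by omega
              rw [hj1, Nat.clog_one_right]
            · right
              exact Nat.pow_pred_clog_lt_self (by omega) (by omega)
          have hzi := IH i (by omega) (Nat.clog p i) (by omega)
            (Nat.le_pow_clog (by omega) i) hilow
          have hzj := IH j (by omega) (Nat.clog p j) (by omega)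
            (Nat.le_pow_clog (by omega) j) hjlow
          rw [hzi, hzj]
          rw [Subgroup.commutator_le]
          intro g1 hg1 g2 hg2
          refine DZ.comm_mem hp2 hk hmk (DZ.Hs_le_Ks hp2 hk hmk _ hg1)
            (DZ.Hs_le_Ks hp2 hk hmk _ hg2) ?_
          by_contra hcon
          push_neg at hcon
          have h2s : 2 ≤ s := by omega
          have hi2 : p ^ Nat.clog p i ≤ p ^ (s - 2) :=
            Nat.pow_le_pow_right (by omega) (by omega)
          have hj2 : p ^ Nat.clog p j ≤ p ^ (s - 2) :=
            Nat.pow_le_pow_right (by omega) (by omega)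
          have hq : p ^ (s - 2) * p = p ^ (s - 1) := by rw [← pow_succ]; congr 1; omega
          have hcm : p * p ^ (s - 2) = p ^ (s - 2) * p := Nat.mul_comm _ _
          have hp3' : 3 * p ^ (s - 2) ≤ p * p ^ (s - 2) :=
            Nat.mul_le_mul_right (p ^ (s - 2)) hp3
          have hipow := Nat.le_pow_clog (show 1 < p by omega) i
          have hjpow := Nat.le_pow_clog (show 1 < p by omega) j
          rcases hlow with h | h
          · omega
          · omega
      · refine le_trans ?_ le_sup_left
        show Subgroup.closure
            {x : PresentedGroup (demushkinRels p m k) | ∃ g, g ^ p ^ s = x} ≤ _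
        rw [Subgroup.closure_le]
        rintro x ⟨g, rfl⟩
        refine Subgroup.subset_closure ⟨g ^ p ^ (s - 1), ?_, ?_⟩
        · rw [hrec]
          exact Subgroup.subset_closure ⟨g, rfl⟩
        · show (g ^ p ^ (s - 1)) ^ p = g ^ p ^ s
          rw [← pow_mul, ← pow_succ]
          congr 2
          omega
end
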